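/- arXiv:1202.6095 — 5 statements merged into one kernel-verified Lean document; each statement's English description precedes it below -/
import Mathlib

section
/- Fix an integer t ≥ 1. For every sequence of integers (i_n) indexed by n with t ≤ i_n ≤ n−1 for each n, the miscorrection-adjusted failure probability satisfies lim_{n→∞} P_n(i_n) = 1. -/
open Finset Filter

/-- `ℓ(i,δ,j) = i − δ + 2j + 1` (natural subtraction; the defining ranges guarantee
`i ≥ δ` wherever this is used). -/
def ell (i δ j : ℕ) : ℕ := i - δ + 2 * j + 1

/-- `V(n,i,δ,j) = C(ℓ, ℓ−j)·C(n−ℓ−1, δ−1−j)/C(n−1,i)`. -/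
noncomputable def V (n i δ j : ℕ) : ℝ :=
  (Nat.choose (ell i δ j) (ell i δ j - j) : ℝ) *
    (Nat.choose (n - ell i δ j - 1) (δ - 1 - j) : ℝ) / (Nat.choose (n - 1) i : ℝ)

/-- Binomial approximation to the weight distribution of a `t`-error-correcting
binary primitive BCH code of length `n`: `Â_l = (n+1)^{−t}·C(n,l)`. -/
noncomputable def Ahat (t n l : ℕ) : ℝ :=
  ((n : ℝ) + 1) ^ (-(t : ℤ)) * (Nat.choose n l : ℝ)

/-- `P_n(i)`: probability that a bit decoded by bounded-distance decoding remains in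
error given it was initially in error and `i` of the other `n−1` positions are in error. -/
noncomputable def Pn (t n i : ℕ) : ℝ :=
  if i < t then 0
  else if i ≤ n - t - 2 then
    1 - ∑ δ ∈ Icc 1 t, ∑ j ∈ range δ,
      (((n : ℝ) - (ell i δ j : ℝ)) / (n : ℝ)) * Ahat t n (ell i δ j) * V n i δ j
  else 1

/-- ratio stepping lemma: `C(N, a-r)·(N+1-a)^r ≤ C(N,a)·(N+1)^r`. -/
lemma aux_ratio (N a : ℕ) : ∀ r, r ≤ a → a ≤ N →
    Nat.choose N (a - r) * (N + 1 - a) ^ r ≤ Nat.choose N a * (N + 1) ^ r := by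
  intro r
  induction r with
  | zero => simp
  | succ r ih =>
    intro hra haN
    have h1 : Nat.choose N (a - r - 1) * (N + 1 - a) ≤ Nat.choose N (a - r) * (N + 1) := by
      have hid := Nat.choose_succ_right_eq N (a - r - 1)
      have he : a - r - 1 + 1 = a - r := by omega
      rw [he] at hid
      calc Nat.choose N (a - r - 1) * (N + 1 - a)
          ≤ Nat.choose N (a - r - 1) * (N - (a - r - 1)) := by
            apply Nat.mul_le_mul_left; omega
        _ = Nat.choose N (a - r) * (a - r) := hid.symm
        _ ≤ Nat.choose N (a - r) * (N + 1) := by apply Nat.mul_le_mul_left; omega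
    have he2 : a - (r + 1) = a - r - 1 := by omega
    calc Nat.choose N (a - (r + 1)) * (N + 1 - a) ^ (r + 1)
        = (Nat.choose N (a - r - 1) * (N + 1 - a)) * (N + 1 - a) ^ r := by
          rw [he2]; ring
      _ ≤ (Nat.choose N (a - r) * (N + 1)) * (N + 1 - a) ^ r := by
          exact Nat.mul_le_mul_right _ h1
      _ = (Nat.choose N (a - r) * (N + 1 - a) ^ r) * (N + 1) := by ring
      _ ≤ (Nat.choose N a * (N + 1) ^ r) * (N + 1) := by
          exact Nat.mul_le_mul_right _ (ih (by omega) haN)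
      _ = Nat.choose N a * (N + 1) ^ (r + 1) := by ring

/-- key counting bound -/
lemma aux_key (n i δ j : ℕ) (hδ1 : 1 ≤ δ) (hj : j < δ) (hδi : δ ≤ i)
    (hin : i + δ + 2 ≤ n) :
    Nat.choose n (i - δ + 2*j + 1) * Nat.choose (i - δ + 2*j + 1) j *
      Nat.choose (n - (i - δ + 2*j + 1) - 1) (δ - 1 - j) * (n - (i - δ + 2*j + 1)) *
      (n - i) ^ (δ - j)
    ≤ Nat.choose (n - 1) i * n ^ δ * (n - (i - δ + 2*j + 1)) ^ (δ - j) := by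
  set ℓ := i - δ + 2*j + 1 with hℓ
  set r := δ - 1 - j with hr
  have hjℓ : j ≤ ℓ := by omega
  have hℓn : ℓ ≤ n := by omega
  have hir : ℓ - j = i - r := by omega
  have h1 : Nat.choose n ℓ * Nat.choose ℓ j
      = Nat.choose n j * Nat.choose (n - j) (i - r) := by
    rw [Nat.choose_mul hjℓ, hir]
  have h3 : Nat.choose (n - j) (i - r) ≤ Nat.choose n (i - r) :=
    Nat.choose_le_choose _ (by omega)
  have h4 : Nat.choose n (i - r) * (n - i) ≤ Nat.choose (n - 1) (i - r) * n := by
    have hid := Nat.choose_mul_succ_eq (n - 1) (i - r)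
    have he : n - 1 + 1 = n := by omega
    rw [he] at hid
    calc Nat.choose n (i - r) * (n - i)
        ≤ Nat.choose n (i - r) * (n - (i - r)) := by apply Nat.mul_le_mul_left; omega
      _ = Nat.choose (n - 1) (i - r) * n := hid.symm
  have h5 : Nat.choose (n - 1) i * (n - i) ^ r ≥ Nat.choose (n - 1) (i - r) * (n - i) ^ r
      ∨ True := Or.inr trivial
  have h5' : Nat.choose (n - 1) (i - r) * (n - i) ^ r ≤ Nat.choose (n - 1) i * n ^ r := by
    have := aux_ratio (n - 1) i r (by omega) (by omega)
    have he1 : n - 1 + 1 - i = n - i := by omega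
    have he2 : n - 1 + 1 = n := by omega
    rwa [he1, he2] at this
  have h6 : Nat.choose n j ≤ n ^ j := Nat.choose_le_pow n j
  have h7 : Nat.choose (n - ℓ - 1) r ≤ (n - ℓ) ^ r :=
    le_trans (Nat.choose_le_pow _ _) (Nat.pow_le_pow_left (by omega) r)
  have hδj : δ - j = r + 1 := by omega
  calc Nat.choose n ℓ * Nat.choose ℓ j * Nat.choose (n - ℓ - 1) r * (n - ℓ) * (n - i) ^ (δ - j)
      = Nat.choose n j * ((Nat.choose (n - j) (i - r) * (n - i)) * (n - i) ^ r)
          * (Nat.choose (n - ℓ - 1) r * (n - ℓ)) := by rw [hδj]; rw [mul_assoc (Nat.choose n ℓ)] ; rw [← mul_assoc, h1]; ring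
    _ ≤ n ^ j * ((Nat.choose n (i - r) * (n - i)) * (n - i) ^ r)
          * ((n - ℓ) ^ r * (n - ℓ)) := by gcongr
    _ ≤ n ^ j * ((Nat.choose (n - 1) (i - r) * n) * (n - i) ^ r)
          * ((n - ℓ) ^ r * (n - ℓ)) := by gcongr
    _ = n ^ j * n * (Nat.choose (n - 1) (i - r) * (n - i) ^ r)
          * ((n - ℓ) ^ r * (n - ℓ)) := by ring
    _ ≤ n ^ j * n * (Nat.choose (n - 1) i * n ^ r) * ((n - ℓ) ^ r * (n - ℓ)) := by gcongr
    _ = Nat.choose (n - 1) i * (n ^ j * n ^ r * n) * (n - ℓ) ^ (r + 1) := by ring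
    _ = Nat.choose (n - 1) i * n ^ δ * (n - ℓ) ^ (δ - j) := by
        rw [hδj]
        congr 2
        rw [← pow_add, ← pow_succ]
        congr 1
        omega

lemma aux_term_le (t n i δ j : ℕ) (hδ1 : 1 ≤ δ) (hδt : δ ≤ t) (hj : j < δ)
    (hti : t ≤ i) (hin : i + t + 2 ≤ n) :
    ((n : ℝ) - (ell i δ j : ℝ)) / (n : ℝ) * Ahat t n (ell i δ j) * V n i δ j
      ≤ (2 : ℝ) ^ t / (n : ℝ) := by
  have hℓi : ell i δ j ≤ i + t := by unfold ell; omega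
  have hℓn : ell i δ j + 2 ≤ n := by omega
  have hnpos : 0 < n := by omega
  have hD : 0 < Nat.choose (n - 1) i := Nat.choose_pos (by omega)
  have hsymm : Nat.choose (ell i δ j) (ell i δ j - j) = Nat.choose (ell i δ j) j :=
    Nat.choose_symm (by unfold ell; omega)
  -- the natural-number bound
  have hkey := aux_key n i δ j hδ1 hj (by omega) (by omega)
  have hdup : (n - (i - δ + 2*j + 1)) ≤ 2 * (n - i) := by omega
  have hnat : Nat.choose n (ell i δ j) * Nat.choose (ell i δ j) j *
      Nat.choose (n - ell i δ j - 1) (δ - 1 - j) * (n - ell i δ j)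
      ≤ 2 ^ t * (n + 1) ^ t * Nat.choose (n - 1) i := by
    have hpow : (n - (i - δ + 2*j + 1)) ^ (δ - j) ≤ (2 * (n - i)) ^ (δ - j) :=
      Nat.pow_le_pow_left hdup _
    have h2 : Nat.choose n (ell i δ j) * Nat.choose (ell i δ j) j *
        Nat.choose (n - ell i δ j - 1) (δ - 1 - j) * (n - ell i δ j) * (n - i) ^ (δ - j)
        ≤ Nat.choose (n - 1) i * n ^ δ * (2 ^ (δ - j) * (n - i) ^ (δ - j)) := by
      refine le_trans hkey ?_
      refine le_trans (Nat.mul_le_mul_left (Nat.choose (n - 1) i * n ^ δ) hpow) ?_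
      rw [mul_pow]
    have hpos : 0 < (n - i) ^ (δ - j) := pow_pos (by omega) _
    have h3 : Nat.choose n (ell i δ j) * Nat.choose (ell i δ j) j *
        Nat.choose (n - ell i δ j - 1) (δ - 1 - j) * (n - ell i δ j)
        ≤ Nat.choose (n - 1) i * n ^ δ * 2 ^ (δ - j) :=
      Nat.le_of_mul_le_mul_right (by calc
        Nat.choose n (ell i δ j) * Nat.choose (ell i δ j) j *
            Nat.choose (n - ell i δ j - 1) (δ - 1 - j) * (n - ell i δ j) * (n - i) ^ (δ - j)
            ≤ Nat.choose (n - 1) i * n ^ δ * (2 ^ (δ - j) * (n - i) ^ (δ - j)) := h2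
        _ = Nat.choose (n - 1) i * n ^ δ * 2 ^ (δ - j) * (n - i) ^ (δ - j) := by ring) hpos
    refine le_trans h3 ?_
    have ha : n ^ δ ≤ (n + 1) ^ t :=
      le_trans (Nat.pow_le_pow_left (by omega) δ) (Nat.pow_le_pow_right (by omega) hδt)
    have hb : 2 ^ (δ - j) ≤ 2 ^ t := Nat.pow_le_pow_right (by omega) (by omega)
    calc Nat.choose (n - 1) i * n ^ δ * 2 ^ (δ - j)
        ≤ Nat.choose (n - 1) i * (n + 1) ^ t * 2 ^ t := by
          exact Nat.mul_le_mul (Nat.mul_le_mul_left _ ha) hb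
      _ = 2 ^ t * (n + 1) ^ t * Nat.choose (n - 1) i := by ring
  -- now translate to ℝ
  have hcast : ((n : ℝ) - (ell i δ j : ℝ)) = ((n - ell i δ j : ℕ) : ℝ) := by
    rw [Nat.cast_sub (by omega)]
  have hzpow : ((n : ℝ) + 1) ^ (-(t : ℤ)) = (((n : ℝ) + 1) ^ t)⁻¹ := by
    rw [zpow_neg, zpow_natCast]
  have hDpos : (0 : ℝ) < (Nat.choose (n - 1) i : ℝ) := by exact_mod_cast hD
  have hnR : (0 : ℝ) < (n : ℝ) := by exact_mod_cast hnpos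
  have hn1 : (0 : ℝ) < ((n : ℝ) + 1) ^ t := by positivity
  rw [V, Ahat, hsymm, hcast, hzpow]
  have hR : ((Nat.choose n (ell i δ j) : ℝ) * Nat.choose (ell i δ j) j *
      Nat.choose (n - ell i δ j - 1) (δ - 1 - j) * ((n - ell i δ j : ℕ) : ℝ))
      ≤ (2 : ℝ) ^ t * ((n : ℝ) + 1) ^ t * (Nat.choose (n - 1) i : ℝ) := by
    have h := hnat
    have h' : ((Nat.choose n (ell i δ j) * Nat.choose (ell i δ j) j *
        Nat.choose (n - ell i δ j - 1) (δ - 1 - j) * (n - ell i δ j) : ℕ) : ℝ)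
        ≤ ((2 ^ t * (n + 1) ^ t * Nat.choose (n - 1) i : ℕ) : ℝ) := by exact_mod_cast h
    push_cast at h'
    linarith
  have hEq : ((n - ell i δ j : ℕ) : ℝ) / (n : ℝ) *
        ((((n : ℝ) + 1) ^ t)⁻¹ * (Nat.choose n (ell i δ j) : ℝ)) *
        ((Nat.choose (ell i δ j) j : ℝ) * (Nat.choose (n - ell i δ j - 1) (δ - 1 - j) : ℝ) /
          (Nat.choose (n - 1) i : ℝ))
      = ((Nat.choose n (ell i δ j) : ℝ) * Nat.choose (ell i δ j) j *
          Nat.choose (n - ell i δ j - 1) (δ - 1 - j) * ((n - ell i δ j : ℕ) : ℝ)) /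
          (((n : ℝ) + 1) ^ t * (Nat.choose (n - 1) i : ℝ) * (n : ℝ)) := by
    field_simp
  rw [hEq, div_le_div_iff₀ (by positivity) hnR]
  calc (Nat.choose n (ell i δ j) : ℝ) * (Nat.choose (ell i δ j) j : ℝ) *
        (Nat.choose (n - ell i δ j - 1) (δ - 1 - j) : ℝ) * ((n - ell i δ j : ℕ) : ℝ) * (n : ℝ)
      ≤ ((2 : ℝ) ^ t * ((n : ℝ) + 1) ^ t * (Nat.choose (n - 1) i : ℝ)) * (n : ℝ) :=
        mul_le_mul_of_nonneg_right hR hnR.le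
    _ = (2 : ℝ) ^ t * (((n : ℝ) + 1) ^ t * (Nat.choose (n - 1) i : ℝ) * (n : ℝ)) := by ring

lemma aux_term_nonneg (t n i δ j : ℕ) (hδ1 : 1 ≤ δ) (hδt : δ ≤ t) (hj : j < δ)
    (hti : t ≤ i) (hin : i + t + 2 ≤ n) :
    0 ≤ ((n : ℝ) - (ell i δ j : ℝ)) / (n : ℝ) * Ahat t n (ell i δ j) * V n i δ j := by
  have hℓn : ell i δ j ≤ n := by unfold ell; omega
  have h1 : (0:ℝ) ≤ ((n : ℝ) - (ell i δ j : ℝ)) / (n : ℝ) := by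
    apply div_nonneg _ (by positivity)
    have : ((ell i δ j : ℝ)) ≤ (n : ℝ) := by exact_mod_cast hℓn
    linarith
  have h2 : (0:ℝ) ≤ Ahat t n (ell i δ j) := by
    rw [Ahat]; positivity
  have h3 : (0:ℝ) ≤ V n i δ j := by
    rw [V]; positivity
  positivity

lemma aux_sum_le (t n i : ℕ) (ht : 1 ≤ t) (hti : t ≤ i) (hin : i + t + 2 ≤ n) :
    ∑ δ ∈ Icc 1 t, ∑ j ∈ range δ,
        (((n : ℝ) - (ell i δ j : ℝ)) / (n : ℝ)) * Ahat t n (ell i δ j) * V n i δ j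
      ≤ (t : ℝ) * t * 2 ^ t / n := by
  calc ∑ δ ∈ Icc 1 t, ∑ j ∈ range δ,
        (((n : ℝ) - (ell i δ j : ℝ)) / (n : ℝ)) * Ahat t n (ell i δ j) * V n i δ j
      ≤ ∑ δ ∈ Icc 1 t, ∑ _j ∈ range δ, (2 : ℝ) ^ t / n := by
        refine Finset.sum_le_sum fun δ hδ => Finset.sum_le_sum fun j hj => ?_
        rw [Finset.mem_Icc] at hδ
        rw [Finset.mem_range] at hj
        exact aux_term_le t n i δ j hδ.1 hδ.2 hj hti hin
    _ ≤ ∑ _δ ∈ Icc 1 t, (t : ℝ) * ((2 : ℝ) ^ t / n) := by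
        refine Finset.sum_le_sum fun δ hδ => ?_
        rw [Finset.mem_Icc] at hδ
        rw [Finset.sum_const, Finset.card_range, nsmul_eq_mul]
        have hδt : (δ : ℝ) ≤ (t : ℝ) := by exact_mod_cast hδ.2
        have : (0:ℝ) ≤ (2 : ℝ) ^ t / n := by positivity
        exact mul_le_mul_of_nonneg_right hδt this
    _ = (t : ℝ) * t * 2 ^ t / n := by
        rw [Finset.sum_const, Nat.card_Icc, nsmul_eq_mul]
        simp
        ring

lemma aux_sum_nonneg (t n i : ℕ) (ht : 1 ≤ t) (hti : t ≤ i) (hin : i + t + 2 ≤ n) :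
    0 ≤ ∑ δ ∈ Icc 1 t, ∑ j ∈ range δ,
        (((n : ℝ) - (ell i δ j : ℝ)) / (n : ℝ)) * Ahat t n (ell i δ j) * V n i δ j := by
  refine Finset.sum_nonneg fun δ hδ => Finset.sum_nonneg fun j hj => ?_
  rw [Finset.mem_Icc] at hδ
  rw [Finset.mem_range] at hj
  exact aux_term_nonneg t n i δ j hδ.1 hδ.2 hj hti hin

lemma aux_Pn_bounds (t n i : ℕ) (ht : 1 ≤ t) (h1 : t ≤ i) (h2 : i ≤ n - 1)
    (hn : 4 * t + 4 < n) :
    1 - (t : ℝ) * t * 2 ^ t / n ≤ Pn t n i ∧ Pn t n i ≤ 1 := by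
  have hCn : (0:ℝ) ≤ (t : ℝ) * t * 2 ^ t / n := by positivity
  rw [Pn, if_neg (by omega)]
  by_cases hc : i ≤ n - t - 2
  · rw [if_pos hc]
    have hin : i + t + 2 ≤ n := by omega
    constructor
    · linarith [aux_sum_le t n i ht h1 hin]
    · linarith [aux_sum_nonneg t n i ht h1 hin]
  · rw [if_neg hc]
    constructor
    · linarith
    · exact le_refl 1

/-- for `t ≥ 1` and any sequence `i_n` with `t ≤ i_n ≤ n−1`,
`lim_{n→∞} P_n(i_n) = 1`. -/
theorem stmt0 (t : ℕ) (ht : 1 ≤ t) (i : ℕ → ℕ)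
    (hi : ∀ n, 4 * t + 4 < n → t ≤ i n ∧ i n ≤ n - 1) :
    Tendsto (fun n => Pn t n (i n)) atTop (nhds 1) := by
  have hlim : Tendsto (fun n : ℕ => 1 - (t : ℝ) * t * 2 ^ t / n) atTop (nhds 1) := by
    have h0 : Tendsto (fun n : ℕ => ((t : ℝ) * t * 2 ^ t) / n) atTop (nhds 0) :=
      tendsto_const_div_atTop_nhds_zero_nat _
    simpa using tendsto_const_nhds.sub h0
  refine tendsto_of_tendsto_of_tendsto_of_le_of_le' hlim tendsto_const_nhds ?_ ?_
  · filter_upwards [eventually_gt_atTop (4 * t + 4)] with n hn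
    exact (aux_Pn_bounds t n (i n) ht (hi n hn).1 (hi n hn).2 hn).1
  · filter_upwards [eventually_gt_atTop (4 * t + 4)] with n hn
    exact (aux_Pn_bounds t n (i n) ht (hi n hn).1 (hi n hn).2 hn).2
end

section
/- Fix an integer t ≥ 2. For every sequence of integers (i_n) indexed by n with t ≤ i_n ≤ n−1 for each n, the miscorrection-adjusted failure probability for the even-weight subcode satisfies lim_{n→∞} P̃_n(i_n) = 1. -/
open Finset Filter

/-- Approximate weight distribution of the even-weight subcode:
`Ã_l = (n+1)^{−t}·C(n,l)` for even `l`, and `Ã_l = 0` for odd `l`. -/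
noncomputable def Atil (t n l : ℕ) : ℝ :=
  if l % 2 = 0 then Ahat t n l else 0

/-- `P̃_n(i)`: probability that a bit decoded by bounded-distance decoding of the
even-weight subcode remains in error given it was in error and `i` of the other
`n−1` positions are in error. -/
noncomputable def Ptil (t n i : ℕ) : ℝ :=
  if i < t then 0
  else if i ≤ n - t - 2 then
    1 - ∑ δ ∈ Icc 1 t, ∑ j ∈ range δ,
      (((n : ℝ) - (ell i δ j : ℝ)) / (n : ℝ)) * Atil t n (ell i δ j) * V n i δ j
  else 1

/- ## Auxiliary lemmas -/

private lemma mychoose_le_pow (n r : ℕ) : n.choose r ≤ n ^ r := by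
  induction r with
  | zero => simp
  | succ r ih =>
    calc n.choose (r+1) ≤ n.choose (r+1) * (r+1) := Nat.le_mul_of_pos_right _ (Nat.succ_pos r)
      _ = n.choose r * (n - r) := Nat.choose_succ_right_eq n r
      _ ≤ n ^ r * n := Nat.mul_le_mul ih (Nat.sub_le n r)
      _ = n ^ (r+1) := by ring

private lemma lemA (m i : ℕ) : ∀ d, m.choose (i + d) * i ^ d ≤ m.choose i * (m - i) ^ d := by
  intro d
  induction d with
  | zero => simp
  | succ d ih =>
    have step : m.choose (i + d + 1) * i ≤ m.choose (i + d) * (m - i) := by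
      calc m.choose (i + d + 1) * i ≤ m.choose (i + d + 1) * (i + d + 1) :=
            Nat.mul_le_mul le_rfl (by omega)
        _ = m.choose (i + d) * (m - (i + d)) := Nat.choose_succ_right_eq m (i + d)
        _ ≤ m.choose (i + d) * (m - i) := Nat.mul_le_mul le_rfl (by omega)
    calc m.choose (i + (d+1)) * i ^ (d+1)
        = (m.choose (i + d + 1) * i) * i ^ d := by ring_nf
      _ ≤ (m.choose (i + d) * (m - i)) * i ^ d := Nat.mul_le_mul step le_rfl
      _ = (m.choose (i + d) * i ^ d) * (m - i) := by ring
      _ ≤ (m.choose i * (m - i) ^ d) * (m - i) := Nat.mul_le_mul ih le_rfl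
      _ = m.choose i * (m - i) ^ (d+1) := by ring

private lemma lemB (m i : ℕ) :
    ∀ d, d ≤ i → m.choose (i - d) * (m - i) ^ d ≤ m.choose i * i ^ d := by
  intro d
  induction d with
  | zero => simp
  | succ d ih =>
    intro hd
    have hk : i - d = (i - (d+1)) + 1 := by omega
    have step : m.choose (i - (d+1)) * (m - i) ≤ m.choose (i - d) * i := by
      calc m.choose (i - (d+1)) * (m - i)
          ≤ m.choose (i - (d+1)) * (m - (i - (d+1))) := Nat.mul_le_mul le_rfl (by omega)
        _ = m.choose ((i - (d+1)) + 1) * ((i - (d+1)) + 1) :=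
            (Nat.choose_succ_right_eq m (i - (d+1))).symm
        _ = m.choose (i - d) * (i - d) := by rw [← hk]
        _ ≤ m.choose (i - d) * i := Nat.mul_le_mul le_rfl (by omega)
    calc m.choose (i - (d+1)) * (m - i) ^ (d+1)
        = (m.choose (i - (d+1)) * (m - i)) * (m - i) ^ d := by ring
      _ ≤ (m.choose (i - d) * i) * (m - i) ^ d := Nat.mul_le_mul step le_rfl
      _ = (m.choose (i - d) * (m - i) ^ d) * i := by ring
      _ ≤ (m.choose i * i ^ d) * i := Nat.mul_le_mul (ih (by omega)) le_rfl
      _ = m.choose i * i ^ (d+1) := by ring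

private lemma pows (n a b c p q r : ℕ) (ha : a ≤ n) (hb : b ≤ n) (hc : c ≤ n) :
    a ^ p * b ^ q * c ^ r ≤ n ^ (p + q + r) := by
  calc a ^ p * b ^ q * c ^ r ≤ n ^ p * n ^ q * n ^ r :=
        Nat.mul_le_mul (Nat.mul_le_mul (Nat.pow_le_pow_left ha p) (Nat.pow_le_pow_left hb q))
          (Nat.pow_le_pow_left hc r)
    _ = n ^ (p + q + r) := by rw [← pow_add, ← pow_add]

private lemma key0 (t n i δ j : ℕ) (ht : 2 ≤ t) (hδ1 : 1 ≤ δ) (hδt : δ ≤ t)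
    (hj : j < δ) (hit : t ≤ i) (hin : i + t + 2 ≤ n) :
    (n-1).choose (ell i δ j) * (ell i δ j).choose j * (n - ell i δ j - 1).choose (δ - 1 - j)
      ≤ 4 ^ t * n ^ (t - 1) * (n-1).choose i := by
  have hl' : ell i δ j = i - δ + 2*j + 1 := rfl
  set l := ell i δ j with hldef
  have h2i : l ≤ 2 * i := by omega
  have hb : (n - l - 1) ≤ 2 * (n - i) := by omega
  have hc1 : l.choose j ≤ (2*i) ^ j :=
    le_trans (mychoose_le_pow l j) (Nat.pow_le_pow_left h2i j)
  have hc2 : (n - l - 1).choose (δ - 1 - j) ≤ (2*(n-i)) ^ (δ - 1 - j) :=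
    le_trans (mychoose_le_pow _ _) (Nat.pow_le_pow_left hb _)
  have hfin : ∀ e : ℕ, e ≤ t - 1 → (2:ℕ) ^ (2 * t) * n ^ e ≤ 4 ^ t * n ^ (t-1) := by
    intro e he
    have h4 : (2:ℕ) ^ (2*t) = 4 ^ t := by
      rw [pow_mul]; norm_num
    rw [h4]
    exact Nat.mul_le_mul le_rfl (Nat.pow_le_pow_right (by omega) he)
  by_cases hcase : δ ≤ 2*j + 1
  · -- "up" case : l = i + d
    set d := 2*j + 1 - δ with hd
    have hld : l = i + d := by omega
    have hij : i ^ j = i ^ d * i ^ (j - d) := by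
      rw [← pow_add]; congr 1; omega
    have hA := lemA (n-1) i d
    calc (n-1).choose l * l.choose j * (n - l - 1).choose (δ - 1 - j)
        ≤ (n-1).choose (i + d) * (2*i) ^ j * (2*(n-i)) ^ (δ-1-j) := by
          rw [hld] at hc1 hc2 ⊢
          exact Nat.mul_le_mul (Nat.mul_le_mul le_rfl hc1) hc2
      _ = ((n-1).choose (i + d) * i ^ d) *
            (2 ^ j * 2 ^ (δ-1-j) * (i ^ (j-d) * (n-i) ^ (δ-1-j))) := by
          rw [mul_pow, mul_pow, hij]; ring
      _ ≤ ((n-1).choose i * ((n-1) - i) ^ d) *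
            (2 ^ j * 2 ^ (δ-1-j) * (i ^ (j-d) * (n-i) ^ (δ-1-j))) :=
          Nat.mul_le_mul hA le_rfl
      _ = (n-1).choose i *
            ((2 ^ j * 2 ^ (δ-1-j)) * (((n-1)-i) ^ d * i ^ (j-d) * (n-i) ^ (δ-1-j))) := by
          ring
      _ ≤ (n-1).choose i * (4 ^ t * n ^ (t-1)) := by
          apply Nat.mul_le_mul le_rfl
          have h2 : (2:ℕ) ^ j * 2 ^ (δ-1-j) ≤ 2 ^ (2*t) := by
            rw [← pow_add]; exact Nat.pow_le_pow_right (by omega) (by omega)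
          have h3 : ((n-1)-i) ^ d * i ^ (j-d) * (n-i) ^ (δ-1-j)
              ≤ n ^ (d + (j-d) + (δ-1-j)) :=
            pows n _ _ _ _ _ _ (by omega) (by omega) (by omega)
          calc (2 ^ j * 2 ^ (δ-1-j)) * (((n-1)-i) ^ d * i ^ (j-d) * (n-i) ^ (δ-1-j))
              ≤ 2 ^ (2*t) * n ^ (d + (j-d) + (δ-1-j)) := Nat.mul_le_mul h2 h3
            _ ≤ 4 ^ t * n ^ (t-1) := hfin _ (by omega)
      _ = 4 ^ t * n ^ (t-1) * (n-1).choose i := by ring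
  · -- "down" case : l = i - d
    set d := δ - 2*j - 1 with hd
    have hld : l = i - d := by omega
    have hdj : δ - 1 - j = d + j := by omega
    have h2d : ((n:ℕ) - i) ^ d ≤ 2 ^ d * ((n-1) - i) ^ d := by
      rw [← mul_pow]; exact Nat.pow_le_pow_left (by omega) d
    have hB := lemB (n-1) i d (by omega)
    calc (n-1).choose l * l.choose j * (n - l - 1).choose (δ - 1 - j)
        ≤ (n-1).choose (i - d) * (2*i) ^ j * (2*(n-i)) ^ (d + j) := by
          rw [hld] at hc1 hc2 ⊢
          rw [hdj] at hc2 ⊢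
          exact Nat.mul_le_mul (Nat.mul_le_mul le_rfl hc1) hc2
      _ = ((n-1).choose (i - d)) *
            ((2 ^ j * 2 ^ (d+j)) * (i ^ j * ((n-i) ^ d * (n-i) ^ j))) := by
          rw [mul_pow, mul_pow, pow_add]; ring
      _ ≤ ((n-1).choose (i - d)) *
            ((2 ^ j * 2 ^ (d+j)) * (i ^ j * ((2 ^ d * ((n-1)-i) ^ d) * (n-i) ^ j))) := by
          apply Nat.mul_le_mul le_rfl
          apply Nat.mul_le_mul le_rfl
          exact Nat.mul_le_mul le_rfl (Nat.mul_le_mul h2d le_rfl)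
      _ = ((n-1).choose (i - d) * ((n-1) - i) ^ d) *
            ((2 ^ j * 2 ^ (d+j) * 2 ^ d) * (i ^ j * (n-i) ^ j)) := by ring
      _ ≤ ((n-1).choose i * i ^ d) *
            ((2 ^ j * 2 ^ (d+j) * 2 ^ d) * (i ^ j * (n-i) ^ j)) :=
          Nat.mul_le_mul hB le_rfl
      _ = (n-1).choose i *
            ((2 ^ j * 2 ^ (d+j) * 2 ^ d) * (i ^ d * i ^ j * (n-i) ^ j)) := by ring
      _ ≤ (n-1).choose i * (4 ^ t * n ^ (t-1)) := by
          apply Nat.mul_le_mul le_rfl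
          have h2 : (2:ℕ) ^ j * 2 ^ (d+j) * 2 ^ d ≤ 2 ^ (2*t) := by
            rw [← pow_add, ← pow_add]; exact Nat.pow_le_pow_right (by omega) (by omega)
          have h3 : i ^ d * i ^ j * (n-i) ^ j ≤ n ^ (d + j + j) :=
            pows n _ _ _ _ _ _ (by omega) (by omega) (by omega)
          calc (2 ^ j * 2 ^ (d+j) * 2 ^ d) * (i ^ d * i ^ j * (n-i) ^ j)
              ≤ 2 ^ (2*t) * n ^ (d + j + j) := Nat.mul_le_mul h2 h3
            _ ≤ 4 ^ t * n ^ (t-1) := hfin _ (by omega)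
      _ = 4 ^ t * n ^ (t-1) * (n-1).choose i := by ring

private lemma key (t n i δ j : ℕ) (ht : 2 ≤ t) (hδ1 : 1 ≤ δ) (hδt : δ ≤ t)
    (hj : j < δ) (hit : t ≤ i) (hin : i + t + 2 ≤ n) :
    (n - ell i δ j) *
        (n.choose (ell i δ j) * (ell i δ j).choose j * (n - ell i δ j - 1).choose (δ - 1 - j))
      ≤ 4 ^ t * n ^ t * (n-1).choose i := by
  set l := ell i δ j with hldef
  have h1 : (n-1).choose l * n = n.choose l * (n - l) := by
    have h := Nat.choose_mul_succ_eq (n-1) l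
    have hn1 : n - 1 + 1 = n := by omega
    rw [hn1] at h
    exact h
  have hre : (n - l) * (n.choose l * l.choose j * (n - l - 1).choose (δ - 1 - j))
      = ((n-1).choose l * l.choose j * (n - l - 1).choose (δ - 1 - j)) * n := by
    calc (n - l) * (n.choose l * l.choose j * (n - l - 1).choose (δ - 1 - j))
        = (n.choose l * (n - l)) * (l.choose j * (n - l - 1).choose (δ - 1 - j)) := by ring
      _ = ((n-1).choose l * n) * (l.choose j * (n - l - 1).choose (δ - 1 - j)) := by rw [← h1]
      _ = ((n-1).choose l * l.choose j * (n - l - 1).choose (δ - 1 - j)) * n := by ring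
  rw [hre]
  have hp : n ^ (t-1) * n = n ^ t := by
    rw [← pow_succ]; congr 1; omega
  calc ((n-1).choose l * l.choose j * (n - l - 1).choose (δ - 1 - j)) * n
      ≤ (4 ^ t * n ^ (t-1) * (n-1).choose i) * n :=
        Nat.mul_le_mul (key0 t n i δ j ht hδ1 hδt hj hit hin) le_rfl
    _ = 4 ^ t * (n ^ (t-1) * n) * (n-1).choose i := by ring
    _ = 4 ^ t * n ^ t * (n-1).choose i := by rw [hp]

private lemma atil_nonneg (t n l : ℕ) : 0 ≤ Atil t n l := by
  unfold Atil Ahat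
  split
  · positivity
  · exact le_rfl

private lemma term_nonneg (t n i δ j : ℕ) (hl : ell i δ j ≤ n) :
    0 ≤ ((n : ℝ) - (ell i δ j : ℝ)) / (n : ℝ) * Atil t n (ell i δ j) * V n i δ j := by
  have h0 : (0:ℝ) ≤ (n : ℝ) - (ell i δ j : ℝ) := by
    have := (Nat.cast_le (α := ℝ)).2 hl
    linarith
  have hA : 0 ≤ Atil t n (ell i δ j) := atil_nonneg t n _
  have hV : 0 ≤ V n i δ j := by
    unfold V; positivity
  have hn : (0:ℝ) ≤ (n:ℝ) := Nat.cast_nonneg n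
  exact mul_nonneg (mul_nonneg (div_nonneg h0 hn) hA) hV

private lemma term_le (t n i δ j : ℕ) (ht : 2 ≤ t) (hδ1 : 1 ≤ δ) (hδt : δ ≤ t)
    (hj : j < δ) (hit : t ≤ i) (hin : i + t + 2 ≤ n) :
    ((n : ℝ) - (ell i δ j : ℝ)) / (n : ℝ) * Atil t n (ell i δ j) * V n i δ j
      ≤ (4:ℝ) ^ t / n := by
  set l := ell i δ j with hldef
  have hl' : l = i - δ + 2*j + 1 := rfl
  have hln : l ≤ n := by omega
  have hjl : j ≤ l := by omega
  have hi1 : i ≤ n - 1 := by omega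
  have hn0 : (0:ℝ) < (n:ℝ) := by
    have : 0 < n := by omega
    exact_mod_cast this
  have hn1 : (0:ℝ) < (n:ℝ) + 1 := by linarith
  have hCi : (0:ℝ) < ((n-1).choose i : ℝ) := by
    exact_mod_cast Nat.choose_pos hi1
  have hcast : (n : ℝ) - (l : ℝ) = ((n - l : ℕ) : ℝ) := by
    rw [Nat.cast_sub hln]
  have hVeq : V n i δ j =
      ((l.choose j : ℝ) * ((n - l - 1).choose (δ - 1 - j) : ℝ)) / ((n-1).choose i : ℝ) := by
    unfold V
    rw [← hldef, Nat.choose_symm hjl]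
  have hAle : Atil t n l ≤ (n.choose l : ℝ) / ((n:ℝ) + 1) ^ t := by
    have hEq : Ahat t n l = (n.choose l : ℝ) / ((n:ℝ) + 1) ^ t := by
      unfold Ahat
      rw [zpow_neg, zpow_natCast]
      rw [inv_mul_eq_div]
    unfold Atil
    split
    · rw [hEq]
    · positivity
  have hVnn : 0 ≤ V n i δ j := by unfold V; positivity
  have hfrac : (0:ℝ) ≤ ((n - l : ℕ) : ℝ) / (n:ℝ) := by positivity
  calc ((n : ℝ) - (l : ℝ)) / (n : ℝ) * Atil t n l * V n i δ j
      ≤ ((n - l : ℕ) : ℝ) / (n : ℝ) * ((n.choose l : ℝ) / ((n:ℝ) + 1) ^ t) * V n i δ j := by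
        rw [hcast]
        exact mul_le_mul_of_nonneg_right (mul_le_mul_of_nonneg_left hAle hfrac) hVnn
    _ = (((n - l) * (n.choose l * l.choose j * (n - l - 1).choose (δ - 1 - j)) : ℕ) : ℝ) /
          ((n:ℝ) * ((n:ℝ) + 1) ^ t * ((n-1).choose i : ℝ)) := by
        rw [hVeq]
        push_cast
        field_simp
    _ ≤ (4:ℝ) ^ t / n := by
        rw [div_le_div_iff₀ (by positivity) hn0]
        have hkey : (((n - l) * (n.choose l * l.choose j * (n - l - 1).choose (δ - 1 - j)) : ℕ) : ℝ)
            ≤ ((4 ^ t * n ^ t * (n-1).choose i : ℕ) : ℝ) := by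
          exact_mod_cast key t n i δ j ht hδ1 hδt hj hit hin
        have hpow : ((n:ℝ)) ^ t ≤ ((n:ℝ) + 1) ^ t := by
          apply pow_le_pow_left₀ (by positivity) (by linarith)
        calc (((n - l) * (n.choose l * l.choose j * (n - l - 1).choose (δ - 1 - j)) : ℕ) : ℝ) * n
            ≤ ((4 ^ t * n ^ t * (n-1).choose i : ℕ) : ℝ) * n := by
              exact mul_le_mul_of_nonneg_right hkey (le_of_lt hn0)
          _ = ((n:ℝ) ^ t) * ((4:ℝ) ^ t * ((n-1).choose i : ℝ) * n) := by push_cast; ring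
          _ ≤ (((n:ℝ) + 1) ^ t) * ((4:ℝ) ^ t * ((n-1).choose i : ℝ) * n) := by
              exact mul_le_mul_of_nonneg_right hpow (by positivity)
          _ = (4:ℝ) ^ t * ((n:ℝ) * ((n:ℝ) + 1) ^ t * ((n-1).choose i : ℝ)) := by ring

/-- for `t ≥ 2` and any sequence `i_n` with `t ≤ i_n ≤ n−1`,
`lim_{n→∞} P̃_n(i_n) = 1`. -/
theorem stmt1 (t : ℕ) (ht : 2 ≤ t) (i : ℕ → ℕ)
    (hi : ∀ n, 4 * t + 4 < n → t ≤ i n ∧ i n ≤ n - 1) :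
    Tendsto (fun n => Ptil t n (i n)) atTop (nhds 1) := by
  set C : ℝ := (t : ℝ) * ((t : ℝ) * ((4:ℝ) ^ t)) with hC
  have hC0 : Tendsto (fun n : ℕ => C / (n:ℝ)) atTop (nhds 0) :=
    tendsto_const_div_atTop_nhds_zero_nat C
  have hlow : Tendsto (fun n : ℕ => 1 - C / (n:ℝ)) atTop (nhds 1) := by
    have h1 : Tendsto (fun _ : ℕ => (1:ℝ)) atTop (nhds 1) := tendsto_const_nhds
    simpa using h1.sub hC0
  apply tendsto_of_tendsto_of_tendsto_of_le_of_le' hlow tendsto_const_nhds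
  · -- lower bound : 1 - C/n ≤ Ptil
    filter_upwards [eventually_gt_atTop (4*t+4)] with n hn
    obtain ⟨h1, h2⟩ := hi n hn
    unfold Ptil
    rw [if_neg (by omega : ¬ i n < t)]
    by_cases hm : i n ≤ n - t - 2
    · rw [if_pos hm]
      have hin : i n + t + 2 ≤ n := by omega
      have hS : (∑ δ ∈ Icc 1 t, ∑ j ∈ range δ,
          (((n : ℝ) - (ell (i n) δ j : ℝ)) / (n : ℝ)) * Atil t n (ell (i n) δ j) * V n (i n) δ j)
          ≤ C / (n:ℝ) := by
        calc (∑ δ ∈ Icc 1 t, ∑ j ∈ range δ,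
              (((n : ℝ) - (ell (i n) δ j : ℝ)) / (n : ℝ)) * Atil t n (ell (i n) δ j) *
                V n (i n) δ j)
            ≤ ∑ δ ∈ Icc 1 t, ((t:ℝ) * ((4:ℝ) ^ t / n)) := by
              apply Finset.sum_le_sum
              intro δ hδ
              obtain ⟨hδ1, hδt⟩ := Finset.mem_Icc.mp hδ
              calc (∑ j ∈ range δ,
                    (((n : ℝ) - (ell (i n) δ j : ℝ)) / (n : ℝ)) * Atil t n (ell (i n) δ j) *
                      V n (i n) δ j)
                  ≤ ∑ _j ∈ range δ, ((4:ℝ) ^ t / n) := by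
                    apply Finset.sum_le_sum
                    intro j hj
                    exact term_le t n (i n) δ j ht hδ1 hδt (Finset.mem_range.mp hj) h1 hin
                _ = (δ:ℝ) * ((4:ℝ) ^ t / n) := by
                    rw [Finset.sum_const, Finset.card_range, nsmul_eq_mul]
                _ ≤ (t:ℝ) * ((4:ℝ) ^ t / n) := by
                    apply mul_le_mul_of_nonneg_right _ (by positivity)
                    exact_mod_cast hδt
          _ = (t:ℝ) * ((t:ℝ) * ((4:ℝ) ^ t / n)) := by
              have hcard : t + 1 - 1 = t := by omega
              rw [Finset.sum_const, nsmul_eq_mul, Nat.card_Icc, hcard]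
          _ = C / (n:ℝ) := by rw [hC]; ring
      linarith
    · rw [if_neg hm]
      have : (0:ℝ) ≤ C / (n:ℝ) := by positivity
      linarith
  · -- upper bound : Ptil ≤ 1
    filter_upwards [eventually_gt_atTop (4*t+4)] with n hn
    obtain ⟨h1, h2⟩ := hi n hn
    unfold Ptil
    rw [if_neg (by omega : ¬ i n < t)]
    by_cases hm : i n ≤ n - t - 2
    · rw [if_pos hm]
      have hS0 : (0:ℝ) ≤ ∑ δ ∈ Icc 1 t, ∑ j ∈ range δ,
          (((n : ℝ) - (ell (i n) δ j : ℝ)) / (n : ℝ)) * Atil t n (ell (i n) δ j) *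
            V n (i n) δ j := by
        apply Finset.sum_nonneg
        intro δ hδ
        apply Finset.sum_nonneg
        intro j hj
        obtain ⟨hδ1, hδt⟩ := Finset.mem_Icc.mp hδ
        have hl : ell (i n) δ j ≤ n := by
          have : ell (i n) δ j = i n - δ + 2*j + 1 := rfl
          have hjδ := Finset.mem_range.mp hj
          omega
        exact term_nonneg t n (i n) δ j hl
      linarith
    · rw [if_neg hm]
end

section
/- Fix an integer t ≥ 1. For every sequence of integers (i_n) indexed by n with t+1 ≤ i_n ≤ n−t−1 for each n, the miscorrection probability satisfies lim_{n→∞} n·Q_n(i_n) = 1/(t−1)!, i.e., Q_n(i) = (1/((t−1)!·n))·(1+o(1)) uniformly over t+1 ≤ i ≤ n−t−1. -/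
open Finset Filter

/-- `Q_n(i)`: probability that a bit decoded by bounded-distance decoding becomes
erroneous given it was initially correct and `i` of the other `n−1` positions are
in error. -/
noncomputable def Qn (t n i : ℕ) : ℝ :=
  if i ≤ t then 0
  else if i ≤ n - t - 1 then
    ∑ δ ∈ Icc 1 t, ∑ j ∈ range δ,
      (((ell i δ j : ℝ) + 1) / (n : ℝ)) * Ahat t n (ell i δ j + 1) * V n i δ j
  else 1

-- core binomial identity (subtraction-free form)
theorem natid (m a d j : ℕ) (h : a + j + d + 2 ≤ m) :
    Nat.choose m (a + j + 1) * Nat.choose (a + j + 1) j *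
      Nat.choose (m - (a + j + 1)) d =
    Nat.choose m (a + d + 1) * Nat.choose (m - (a + d + 1)) j *
      Nat.choose (a + d + 1) d := by
  have h1 : Nat.choose m (a + j + 1) * Nat.choose (a + j + 1) j
      = Nat.choose m j * Nat.choose (m - j) (a + 1) := by
    have := Nat.choose_mul (n := m) (k := a + j + 1) (s := j) (by omega)
    simpa [show a + j + 1 - j = a + 1 by omega] using this
  have h2 : Nat.choose (m - j) (a + 1 + d) * Nat.choose (a + 1 + d) (a + 1)
      = Nat.choose (m - j) (a + 1) * Nat.choose (m - j - (a + 1)) d := by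
    have := Nat.choose_mul (n := m - j) (k := a + 1 + d) (s := a + 1) (by omega)
    simpa [show a + 1 + d - (a + 1) = d by omega] using this
  have h3 : Nat.choose m (j + (a + d + 1)) * Nat.choose (j + (a + d + 1)) j
      = Nat.choose m j * Nat.choose (m - j) (a + d + 1) := by
    have := Nat.choose_mul (n := m) (k := j + (a + d + 1)) (s := j) (by omega)
    simpa [show j + (a + d + 1) - j = a + d + 1 by omega] using this
  have h4 : Nat.choose m ((a + d + 1) + j) * Nat.choose ((a + d + 1) + j) (a + d + 1)
      = Nat.choose m (a + d + 1) * Nat.choose (m - (a + d + 1)) j := by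
    have := Nat.choose_mul (n := m) (k := (a + d + 1) + j) (s := a + d + 1) (by omega)
    simpa [show (a + d + 1) + j - (a + d + 1) = j by omega] using this
  have hsymm1 : Nat.choose (a + 1 + d) (a + 1) = Nat.choose (a + d + 1) d := by
    rw [show a + 1 + d = a + d + 1 by omega, ← Nat.choose_symm (by omega)]
    congr 1; omega
  have hsymm2 : Nat.choose ((a + d + 1) + j) (a + d + 1) = Nat.choose (j + (a + d + 1)) j := by
    rw [show (a+d+1) + j = j + (a+d+1) by omega, ← Nat.choose_symm (by omega)]
    congr 1; omega
  have hsub : m - j - (a + 1) = m - (a + j + 1) := by omega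
  -- combine
  calc Nat.choose m (a + j + 1) * Nat.choose (a + j + 1) j * Nat.choose (m - (a + j + 1)) d
      = Nat.choose m j * (Nat.choose (m - j) (a + 1) * Nat.choose (m - j - (a + 1)) d) := by
        rw [h1, hsub]; ring
    _ = Nat.choose m j * (Nat.choose (m - j) (a + 1 + d) * Nat.choose (a + 1 + d) (a + 1)) := by
        rw [h2]
    _ = (Nat.choose m j * Nat.choose (m - j) (a + d + 1)) * Nat.choose (a + d + 1) d := by
        rw [hsymm1, show a + 1 + d = a + d + 1 by omega]; ring
    _ = (Nat.choose m ((a + d + 1) + j) * Nat.choose ((a + d + 1) + j) (a + d + 1))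
          * Nat.choose (a + d + 1) d := by rw [← h3, ← hsymm2, show (a+d+1)+j = j+(a+d+1) by omega]
    _ = _ := by rw [h4]

theorem term_eq (t n a d j : ℕ) (hδ : j + d + 1 ≤ t) (ha : t ≤ a + j + d)
    (hn : a + j + d + t + 2 ≤ n) :
    (((ell (a+j+d+1) (j+d+1) j : ℝ) + 1) / (n : ℝ)) *
        Ahat t n (ell (a+j+d+1) (j+d+1) j + 1) * V n (a+j+d+1) (j+d+1) j =
      ((n : ℝ) + 1) ^ (-(t : ℤ)) *
        (Nat.choose (n - 1 - (a+j+d+1)) j : ℝ) * (Nat.choose (a+j+d+1) d : ℝ) := by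
  have hell : ell (a+j+d+1) (j+d+1) j = a + 2*j + 1 := by
    simp only [ell]; omega
  have hsub1 : a + 2*j + 1 - j = a + j + 1 := by omega
  have hsub2 : n - (a + 2*j + 1) - 1 = n - 1 - (a + 2*j + 1) := by omega
  have hsub3 : j + d + 1 - 1 - j = d := by omega
  simp only [V, Ahat, hell, hsub1, hsub2, hsub3]
  -- symmetric choose
  have hsymm : Nat.choose (a + 2*j + 1) (a + j + 1) = Nat.choose (a + 2*j + 1) j := by
    rw [show a + j + 1 = a + 2*j + 1 - j by omega]
    exact Nat.choose_symm (by omega)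
  rw [hsymm]
  have hnat : (a + 2*j + 1 + 1) * Nat.choose n (a + 2*j + 1 + 1)
      = n * Nat.choose (n-1) (a + 2*j + 1) := by
    have h0 := Nat.add_one_mul_choose_eq (n-1) (a + 2*j + 1)
    rw [show n-1+1 = n by omega,
      Nat.mul_comm (Nat.choose n (a+2*j+1+1))] at h0
    exact h0.symm
  have hid := natid (n-1) (a+j) d j (by omega)
  rw [show a + j + j + 1 = a + 2*j + 1 by omega] at hid
  have hRnat : ((a:ℝ) + 2*↑j + 1 + 1) * (Nat.choose n (a + 2*j + 1 + 1) : ℝ)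
      = (n : ℝ) * (Nat.choose (n-1) (a + 2*j + 1) : ℝ) := by exact_mod_cast hnat
  have hRid : (Nat.choose (n-1) (a+2*j+1) : ℝ) * (Nat.choose (a+2*j+1) j : ℝ) *
      (Nat.choose (n-1-(a+2*j+1)) d : ℝ)
      = (Nat.choose (n-1) (a+j+d+1) : ℝ) * (Nat.choose (n-1-(a+j+d+1)) j : ℝ) *
      (Nat.choose (a+j+d+1) d : ℝ) := by exact_mod_cast hid
  have hC0 : (Nat.choose (n-1) (a+j+d+1) : ℝ) ≠ 0 := by
    exact_mod_cast (Nat.choose_pos (by omega : a+j+d+1 ≤ n-1)).ne'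
  have hn0 : (n : ℝ) ≠ 0 := Nat.cast_ne_zero.mpr (by omega)
  rw [show ((n:ℝ) + 1) ^ (-(t:ℤ)) = (((n:ℝ)+1)^t)⁻¹ by rw [zpow_neg, zpow_natCast]]
  have hp : ((n:ℝ)+1)^t ≠ 0 := by positivity
  push_cast
  field_simp
  linear_combination ((((Nat.choose (a+2*j+1) j : ℝ)) * ((Nat.choose (n-1-(a+2*j+1)) d : ℝ))) * hRnat + (n:ℝ) * hRid)

theorem row_sum (n i δ : ℕ) (hδ : 1 ≤ δ) (hi : i ≤ n - 1) :
    ∑ j ∈ range δ, Nat.choose (n-1-i) j * Nat.choose i (δ-1-j) = Nat.choose (n-1) (δ-1) := by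
  have h := Nat.add_choose_eq (n-1-i) i (δ-1)
  rw [show n-1-i+i = n-1 by omega] at h
  rw [h, Finset.Nat.sum_antidiagonal_eq_sum_range_succ_mk, show (δ-1).succ = δ by omega]

theorem Qclosed (t n i : ℕ) (ht : 1 ≤ t) (hi1 : t + 1 ≤ i) (hn : i + t + 1 ≤ n) :
    Qn t n i = ((n:ℝ) + 1) ^ (-(t:ℤ)) * ∑ d ∈ range t, (Nat.choose (n-1) d : ℝ) := by
  rw [Qn, if_neg (by omega), if_pos (by omega)]
  have hrow : ∀ δ ∈ Icc 1 t, (∑ j ∈ range δ,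
      (((ell i δ j : ℝ) + 1) / (n : ℝ)) * Ahat t n (ell i δ j + 1) * V n i δ j)
      = ((n:ℝ) + 1) ^ (-(t:ℤ)) * (Nat.choose (n-1) (δ-1) : ℝ) := by
    intro δ hδ
    rw [Finset.mem_Icc] at hδ
    have hterm : ∀ j ∈ range δ,
        (((ell i δ j : ℝ) + 1) / (n : ℝ)) * Ahat t n (ell i δ j + 1) * V n i δ j
        = ((n:ℝ) + 1) ^ (-(t:ℤ)) *
            ((Nat.choose (n-1-i) j : ℝ) * (Nat.choose i (δ-1-j) : ℝ)) := by
      intro j hj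
      rw [Finset.mem_range] at hj
      obtain ⟨a, dd, hia, hδa⟩ : ∃ a dd, i = a + j + dd + 1 ∧ δ = j + dd + 1 :=
        ⟨i - δ, δ - 1 - j, by omega, by omega⟩
      subst hia hδa
      rw [term_eq t n a dd j (by omega) (by omega) (by omega),
        show j + dd + 1 - 1 - j = dd by omega]
      ring
    rw [Finset.sum_congr rfl hterm, ← Finset.mul_sum]
    congr 1
    exact_mod_cast row_sum n i δ (by omega) (by omega)
  rw [Finset.sum_congr rfl hrow, ← Finset.mul_sum]
  congr 1
  refine Finset.sum_nbij' (fun δ => δ - 1) (fun d => d + 1) ?_ ?_ ?_ ?_ ?_ <;>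
    intro x hx <;> simp only [Finset.mem_Icc, Finset.mem_range] at * <;> try omega

open Filter

theorem tendsto_aux (c : ℝ) :
    Tendsto (fun n : ℕ => ((n:ℝ) + c) / ((n:ℝ) + 1)) atTop (nhds 1) := by
  have h1 : Tendsto (fun n : ℕ => ((n:ℝ) + 1)) atTop atTop :=
    tendsto_atTop_add_const_right _ 1 tendsto_natCast_atTop_atTop
  have h0 : Tendsto (fun n : ℕ => ((n:ℝ) + 1)⁻¹) atTop (nhds 0) := h1.inv_tendsto_atTop
  have h2 : Tendsto (fun n : ℕ => 1 + (c - 1) * ((n:ℝ) + 1)⁻¹) atTop (nhds (1 + (c-1) * 0)) :=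
    tendsto_const_nhds.add (tendsto_const_nhds.mul h0)
  rw [show (1:ℝ) + (c-1)*0 = 1 by ring] at h2
  refine Tendsto.congr (fun n => ?_) h2
  have : ((n:ℝ) + 1) ≠ 0 := by positivity
  field_simp
  ring

theorem inv_tendsto : Tendsto (fun n : ℕ => ((n:ℝ) + 1)⁻¹) atTop (nhds 0) := by
  have h1 : Tendsto (fun n : ℕ => ((n:ℝ) + 1)) atTop atTop :=
    tendsto_atTop_add_const_right _ 1 tendsto_natCast_atTop_atTop
  exact h1.inv_tendsto_atTop

theorem term_tendsto (t d : ℕ) (ht : 1 ≤ t) (hd : d < t) :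
    Tendsto (fun n : ℕ => (n:ℝ) * (((n:ℝ) + 1) ^ (-(t:ℤ)) * (Nat.choose (n-1) d : ℝ))) atTop
      (nhds (if d = t - 1 then 1 / (Nat.factorial (t-1) : ℝ) else 0)) := by
  have hg : Tendsto (fun n : ℕ => (1/(Nat.factorial d : ℝ)) * (((n:ℝ) + 0)/((n:ℝ) + 1)) *
      (∏ k ∈ range d, ((n:ℝ) + (-1 - (k:ℝ)))/((n:ℝ) + 1)) * (((n:ℝ) + 1)⁻¹)^(t-1-d)) atTop
      (nhds ((1/(Nat.factorial d : ℝ)) * 1 * 1 * (0:ℝ)^(t-1-d))) := by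
    refine ((tendsto_const_nhds.mul (tendsto_aux 0)).mul ?_).mul (inv_tendsto.pow _)
    have := tendsto_finset_prod (range d)
      (fun k _ => tendsto_aux (-1 - (k:ℝ)) : ∀ k ∈ range d, Tendsto
        (fun n : ℕ => ((n:ℝ) + (-1 - (k:ℝ)))/((n:ℝ) + 1)) atTop (nhds 1))
    simpa using this
  have hval : (1/(Nat.factorial d : ℝ)) * 1 * 1 * (0:ℝ)^(t-1-d)
      = if d = t - 1 then 1 / (Nat.factorial (t-1) : ℝ) else 0 := by
    by_cases h : d = t - 1
    · subst h; rw [show t - 1 - (t-1) = 0 by omega]; simp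
    · rw [zero_pow (by omega : t - 1 - d ≠ 0)]; simp [h]
  rw [← hval]
  refine Tendsto.congr' ?_ hg
  filter_upwards [eventually_ge_atTop (t+1)] with n hn
  have hz : ((n:ℝ) + 1) ≠ 0 := by positivity
  have hf : (Nat.factorial d : ℝ) ≠ 0 := by positivity
  have hc : (Nat.choose (n-1) d : ℝ) * (Nat.factorial d : ℝ)
      = ∏ k ∈ range d, ((n:ℝ) + (-1 - (k:ℝ))) := by
    have h1 : (n-1).descFactorial d = Nat.factorial d * (n-1).choose d :=
      Nat.descFactorial_eq_factorial_mul_choose _ _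
    have h2 : (n-1).descFactorial d = ∏ k ∈ range d, (n - 1 - k) :=
      Nat.descFactorial_eq_prod_range _ _
    have h3 : (Nat.factorial d : ℝ) * ((n-1).choose d : ℝ)
        = ∏ k ∈ range d, ((n - 1 - k : ℕ) : ℝ) := by
      rw [← Nat.cast_prod, ← h2, h1]; push_cast; ring
    rw [mul_comm, h3]
    refine Finset.prod_congr rfl fun k hk => ?_
    rw [Finset.mem_range] at hk
    have : (1:ℕ) + k ≤ n := by omega
    rw [show n - 1 - k = n - (1 + k) by omega, Nat.cast_sub this]
    push_cast; ring
  have hts : ((n:ℝ) + 1)^t = ((n:ℝ)+1) * ((n:ℝ)+1)^d * ((n:ℝ)+1)^(t-1-d) := by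
    calc ((n:ℝ)+1)^t = ((n:ℝ)+1)^(1+d+(t-1-d)) := by rw [show 1+d+(t-1-d) = t by omega]
      _ = _ := by rw [pow_add, pow_add, pow_one]
  rw [show ((n:ℝ)+1)^(-(t:ℤ)) = (((n:ℝ)+1)^t)⁻¹ by rw [zpow_neg, zpow_natCast]]
  rw [Finset.prod_div_distrib, Finset.prod_const]
  have hzp : ((n:ℝ)+1)^(t-1-d) ≠ 0 := by positivity
  have hzd : ((n:ℝ)+1)^d ≠ 0 := by positivity
  field_simp [hts]
  have hk : (1/((n:ℝ)+1))^(t-1-d) * ((n:ℝ)+1)^(t-1-d) = 1 := by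
    rw [← mul_pow, one_div, inv_mul_cancel₀ hz, one_pow]
  rw [hts, Finset.card_range]
  linear_combination ((n:ℝ) * ((n:ℝ)+1) * ((n:ℝ)+1)^d * ∏ k ∈ range d, ((n:ℝ) + (-1 - (k:ℝ)))) * hk
    - ((n:ℝ) * ((n:ℝ)+1) * ((n:ℝ)+1)^d) * hc

/-- for `t ≥ 1` and any sequence `i_n` with `t+1 ≤ i_n ≤ n−t−1`,
`lim_{n→∞} n·Q_n(i_n) = 1/(t−1)!`. -/
theorem stmt2 (t : ℕ) (ht : 1 ≤ t) (i : ℕ → ℕ)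
    (hi : ∀ n, 4 * t + 4 < n → t + 1 ≤ i n ∧ i n ≤ n - t - 1) :
    Tendsto (fun n : ℕ => (n : ℝ) * Qn t n (i n)) atTop
      (nhds (1 / (Nat.factorial (t - 1) : ℝ))) := by
  have hev : ∀ᶠ n : ℕ in atTop, (∑ d ∈ range t,
      (n:ℝ) * (((n:ℝ) + 1) ^ (-(t:ℤ)) * (Nat.choose (n-1) d : ℝ)))
      = (n : ℝ) * Qn t n (i n) := by
    filter_upwards [eventually_gt_atTop (4*t+4)] with n hn
    obtain ⟨h1, h2⟩ := hi n hn
    rw [Qclosed t n (i n) ht h1 (by omega), Finset.mul_sum, Finset.mul_sum]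
  refine Tendsto.congr' hev ?_
  have hsum := tendsto_finset_sum (range t)
    (fun d hd => term_tendsto t d ht (Finset.mem_range.mp hd))
  have hv : (∑ d ∈ range t, if d = t - 1 then 1 / (Nat.factorial (t-1) : ℝ) else 0)
      = 1 / (Nat.factorial (t-1) : ℝ) := by
    rw [Finset.sum_ite_eq' (range t) (t-1) (fun _ => 1 / (Nat.factorial (t-1) : ℝ)),
      if_pos (Finset.mem_range.mpr (by omega))]
  rw [← hv]
  exact hsum
end

section
/- Fix an integer t ≥ 2. For every sequence of integers (i_n) indexed by n with t+2 ≤ i_n ≤ n−t−2 and i_n + t odd for each n, the even-weight-subcode miscorrection probability satisfies lim_{n→∞} n²·Q̃_n(i_n) = 1/(t−2)!, i.e., Q̃_n(i) = (1/((t−2)!·n²))·(1+o(1)) when i+t is odd. -/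
open Finset Filter

/-- `Q̃_n(i)`: probability that a bit decoded by bounded-distance decoding of the
even-weight subcode becomes erroneous given it was initially correct and `i` of
the other `n−1` positions are in error. -/
noncomputable def Qtil (t n i : ℕ) : ℝ :=
  if i ≤ t + 1 then 0
  else
    ∑ δ ∈ Icc 1 t, ∑ j ∈ range δ,
      (((ell i δ j : ℝ) + 1) / (n : ℝ)) * Atil t n (ell i δ j + 1) * V n i δ j

lemma core (a j m e : ℕ) :
    Nat.choose (a+m+2*j+e+1) (a+2*j+1) * Nat.choose (a+2*j+1) j * Nat.choose (m+e) m
  = Nat.choose (a+m+2*j+e+1) (j+1+m+a) * Nat.choose (j+e) j * Nat.choose (j+1+m+a) m := by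
  have h : ((Nat.choose (a+m+2*j+e+1) (a+2*j+1) * Nat.choose (a+2*j+1) j * Nat.choose (m+e) m : ℕ) : ℝ)
      = ((Nat.choose (a+m+2*j+e+1) (j+1+m+a) * Nat.choose (j+e) j * Nat.choose (j+1+m+a) m : ℕ) : ℝ) := by
    push_cast
    rw [Nat.cast_choose ℝ (by omega : a+2*j+1 ≤ a+m+2*j+e+1),
        Nat.cast_choose ℝ (by omega : j ≤ a+2*j+1),
        Nat.cast_choose ℝ (by omega : m ≤ m+e),
        Nat.cast_choose ℝ (by omega : j+1+m+a ≤ a+m+2*j+e+1),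
        Nat.cast_choose ℝ (by omega : j ≤ j+e),
        Nat.cast_choose ℝ (by omega : m ≤ j+1+m+a)]
    rw [(by omega : a+m+2*j+e+1 - (a+2*j+1) = m+e),
        (by omega : a+2*j+1 - j = a+j+1),
        (by omega : m+e-m = e),
        (by omega : a+m+2*j+e+1 - (j+1+m+a) = j+e),
        (by omega : j+e-j = e),
        (by omega : j+1+m+a - m = a+j+1)]
    have f1 : (Nat.factorial (a+m+2*j+e+1) : ℝ) ≠ 0 := by positivity
    have f2 : (Nat.factorial (a+2*j+1) : ℝ) ≠ 0 := by positivity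
    have f3 : (Nat.factorial (m+e) : ℝ) ≠ 0 := by positivity
    have f4 : (Nat.factorial j : ℝ) ≠ 0 := by positivity
    have f5 : (Nat.factorial (a+j+1) : ℝ) ≠ 0 := by positivity
    have f6 : (Nat.factorial m : ℝ) ≠ 0 := by positivity
    have f7 : (Nat.factorial e : ℝ) ≠ 0 := by positivity
    have f8 : (Nat.factorial (j+1+m+a) : ℝ) ≠ 0 := by positivity
    have f9 : (Nat.factorial (j+e) : ℝ) ≠ 0 := by positivity
    field_simp
  exact_mod_cast h

lemma vand (c i k : ℕ) :
    ∑ j ∈ range (k+1), Nat.choose c j * Nat.choose i (k - j) = Nat.choose (c+i) k := by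
  rw [Nat.add_choose_eq, Finset.Nat.sum_antidiagonal_eq_sum_range_succ
    (f := fun x y => c.choose x * i.choose y)]

lemma natid_s3 (n iv δ j : ℕ) (h1 : δ + 2 ≤ iv) (h2 : iv + δ + 2 ≤ n) (hj : j < δ) :
    Nat.choose (n-1) (ell iv δ j) * Nat.choose (ell iv δ j) j
      * Nat.choose (n - ell iv δ j - 1) (δ-1-j)
  = Nat.choose (n-1) iv * Nat.choose (n-iv-1) j * Nat.choose iv (δ-1-j) := by
  have H := core (iv-δ) j (δ-1-j) (n-iv-1-j)
  rw [(by omega : (iv-δ)+(δ-1-j)+2*j+(n-iv-1-j)+1 = n-1),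
      (by omega : (δ-1-j)+(n-iv-1-j) = n - (iv - δ + 2*j + 1) - 1),
      (by omega : j+1+(δ-1-j)+(iv-δ) = iv),
      (by omega : j+(n-iv-1-j) = n-iv-1)] at H
  simpa [ell] using H

lemma term_eq_s3 (t n iv δ j : ℕ) (h1 : t+2 ≤ iv) (h2 : iv + t + 2 ≤ n)
    (hδ2 : δ ≤ t) (hj : j < δ) (hpar : δ % 2 = iv % 2) :
    (((ell iv δ j : ℝ) + 1) / n) * Atil t n (ell iv δ j + 1) * V n iv δ j
      = ((n:ℝ)+1)^(-(t:ℤ)) * ((Nat.choose (n-iv-1) j * Nat.choose iv (δ-1-j) : ℕ) : ℝ) := by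
  have hpar' : (ell iv δ j + 1) % 2 = 0 := by simp only [ell]; omega
  have hA : (ell iv δ j + 1) * Nat.choose n (ell iv δ j + 1)
      = n * Nat.choose (n-1) (ell iv δ j) := by
    have := Nat.add_one_mul_choose_eq (n-1) (ell iv δ j)
    rw [(by omega : n - 1 + 1 = n)] at this
    rw [mul_comm (ell iv δ j + 1)]
    exact this.symm
  have hB : Nat.choose (ell iv δ j) (ell iv δ j - j) = Nat.choose (ell iv δ j) j :=
    Nat.choose_symm (by simp only [ell]; omega)
  have hC := natid_s3 n iv δ j (by omega) (by omega) hj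
  have hn0 : (n:ℝ) ≠ 0 := Nat.cast_ne_zero.mpr (by omega)
  have hc0 : ((Nat.choose (n-1) iv : ℕ) : ℝ) ≠ 0 :=
    Nat.cast_ne_zero.mpr (Nat.choose_pos (by omega)).ne'
  have hA' : ((ell iv δ j : ℝ) + 1) * (Nat.choose n (ell iv δ j + 1) : ℝ)
      = (n : ℝ) * (Nat.choose (n-1) (ell iv δ j) : ℝ) := by exact_mod_cast hA
  have hC' : (Nat.choose (n-1) (ell iv δ j) : ℝ) * (Nat.choose (ell iv δ j) j : ℝ)
        * (Nat.choose (n - ell iv δ j - 1) (δ-1-j) : ℝ)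
      = (Nat.choose (n-1) iv : ℝ) * (Nat.choose (n-iv-1) j : ℝ)
        * (Nat.choose iv (δ-1-j) : ℝ) := by exact_mod_cast hC
  simp only [Atil, if_pos hpar', Ahat, V, hB]
  push_cast
  set w := ((n:ℝ)+1)^(-(t:ℤ)) with hw
  field_simp
  linear_combination (w * (Nat.choose (ell iv δ j) j : ℝ)
      * (Nat.choose (n - ell iv δ j - 1) (δ-1-j) : ℝ)) * hA' + (w * (n:ℝ)) * hC'

lemma innerSumEq (t n iv δ : ℕ) (h1 : t+2 ≤ iv) (h2 : iv + t + 2 ≤ n)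
    (hδ1 : 1 ≤ δ) (hδ2 : δ ≤ t) :
    ∑ j ∈ range δ, (((ell iv δ j : ℝ) + 1) / n) * Atil t n (ell iv δ j + 1) * V n iv δ j
      = if δ % 2 = iv % 2 then ((n:ℝ)+1)^(-(t:ℤ)) * (Nat.choose (n-1) (δ-1) : ℝ) else 0 := by
  by_cases hpar : δ % 2 = iv % 2
  · rw [if_pos hpar,
      Finset.sum_congr rfl (fun j hj => term_eq_s3 t n iv δ j h1 h2 hδ2 (mem_range.mp hj) hpar),
      ← Finset.mul_sum]
    congr 1
    obtain ⟨k, rfl⟩ : ∃ k, δ = k + 1 := ⟨δ - 1, by omega⟩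
    have : ∀ j, k + 1 - 1 - j = k - j := fun j => by omega
    rw [show (k + 1 - 1) = k from rfl]
    calc ∑ j ∈ range (k+1), ((Nat.choose (n-iv-1) j * Nat.choose iv (k+1-1-j) : ℕ) : ℝ)
        = ((∑ j ∈ range (k+1), Nat.choose (n-iv-1) j * Nat.choose iv (k-j) : ℕ) : ℝ) := by
          push_cast [this]; rfl
      _ = ((Nat.choose ((n-iv-1)+iv) k : ℕ) : ℝ) := by rw [vand]
      _ = (Nat.choose (n-1) k : ℝ) := by rw [(by omega : n-iv-1+iv = n-1)]
  · rw [if_neg hpar]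
    refine Finset.sum_eq_zero fun j hj => ?_
    have hodd : ¬ ((ell iv δ j + 1) % 2 = 0) := by
      have := mem_range.mp hj
      simp only [ell]; omega
    simp [Atil, if_neg hodd]

lemma cast_choose_prod (n k : ℕ) (h : k + 1 ≤ n) :
    (Nat.choose (n-1) k : ℝ) = (∏ r ∈ range k, ((n:ℝ) - 1 - r)) / (Nat.factorial k : ℝ) := by
  rw [eq_div_iff (by positivity)]
  have h1 : Nat.choose (n-1) k * Nat.factorial k = (n-1).descFactorial k := by
    rw [Nat.descFactorial_eq_factorial_mul_choose]; ring
  have h2 : (((n-1).descFactorial k : ℕ) : ℝ) = ∏ r ∈ range k, ((n:ℝ) - 1 - r) := by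
    rw [Nat.descFactorial_eq_prod_range, Nat.cast_prod]
    refine Finset.prod_congr rfl fun r hr => ?_
    have hr' := mem_range.mp hr
    rw [Nat.cast_sub (by omega : r ≤ n-1), Nat.cast_sub (by omega : 1 ≤ n)]
    push_cast; ring
  calc (Nat.choose (n-1) k : ℝ) * (Nat.factorial k : ℝ)
      = ((Nat.choose (n-1) k * Nat.factorial k : ℕ) : ℝ) := by push_cast; ring
    _ = _ := by rw [h1, h2]

lemma keylim (t k : ℕ) (ht : 2 ≤ t) (hk : k ≤ t - 2) :
    Tendsto (fun n : ℕ => (n:ℝ)^2 * (((n:ℝ)+1)^(-(t:ℤ)) * (Nat.choose (n-1) k : ℝ)))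
      atTop (nhds (if k = t-2 then 1/(Nat.factorial k : ℝ) else 0)) := by
  have hn1 : Tendsto (fun n : ℕ => (n:ℝ)+1) atTop atTop :=
    tendsto_atTop_add_const_right _ 1 tendsto_natCast_atTop_atTop
  have hinv : Tendsto (fun n : ℕ => ((n:ℝ)+1)⁻¹) atTop (nhds 0) := hn1.inv_tendsto_atTop
  set s := t - 2 - k with hs
  have hprod : Tendsto (fun n : ℕ => ∏ r ∈ range k, (((n:ℝ)-1-r)/((n:ℝ)+1))) atTop (nhds 1) := by
    have : Tendsto (fun n : ℕ => ∏ r ∈ range k, (((n:ℝ)-1-r)/((n:ℝ)+1))) atTop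
        (nhds (∏ _r ∈ range k, (1:ℝ))) := by
      refine tendsto_finset_prod _ fun r _ => ?_
      have h0 : Tendsto (fun n : ℕ => 1 - ((r:ℝ)+2) * ((n:ℝ)+1)⁻¹) atTop
          (nhds (1 - ((r:ℝ)+2)*0)) := tendsto_const_nhds.sub (tendsto_const_nhds.mul hinv)
      have he : ∀ n : ℕ, 1 - ((r:ℝ)+2) * ((n:ℝ)+1)⁻¹ = ((n:ℝ)-1-r)/((n:ℝ)+1) := by
        intro n
        have : ((n:ℝ)+1) ≠ 0 := by positivity
        field_simp
        ring
      simpa [funext he] using h0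
    simpa using this
  have hfrac : Tendsto (fun n : ℕ => ((n:ℝ)/((n:ℝ)+1))^2) atTop (nhds 1) := by
    have h0 : Tendsto (fun n : ℕ => 1 - ((n:ℝ)+1)⁻¹) atTop (nhds (1 - 0)) :=
      tendsto_const_nhds.sub hinv
    have he : ∀ n : ℕ, 1 - ((n:ℝ)+1)⁻¹ = (n:ℝ)/((n:ℝ)+1) := by
      intro n
      have : ((n:ℝ)+1) ≠ 0 := by positivity
      field_simp
      ring
    have := (h0.congr he).pow 2
    simpa using this
  have hlast : Tendsto (fun n : ℕ => (((n:ℝ)+1)⁻¹)^s) atTop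
      (nhds (if s = 0 then 1 else 0)) := by
    rcases Nat.eq_zero_or_pos s with h | h
    · simpa [h] using (tendsto_const_nhds : Tendsto (fun _ : ℕ => (1:ℝ)) atTop (nhds 1))
    · have := hinv.pow s
      rw [zero_pow (by omega : s ≠ 0)] at this
      simpa [if_neg (by omega : ¬ s = 0)] using this
  have hmodel : Tendsto (fun n : ℕ =>
      ((1/(Nat.factorial k : ℝ)) * (∏ r ∈ range k, (((n:ℝ)-1-r)/((n:ℝ)+1)))
        * ((n:ℝ)/((n:ℝ)+1))^2) * (((n:ℝ)+1)⁻¹)^s) atTop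
      (nhds (((1/(Nat.factorial k : ℝ)) * 1 * 1) * (if s = 0 then 1 else 0))) :=
    ((tendsto_const_nhds.mul hprod).mul hfrac).mul hlast
  have hval : ((1/(Nat.factorial k : ℝ)) * 1 * 1) * (if s = 0 then 1 else 0)
      = (if k = t-2 then 1/(Nat.factorial k : ℝ) else 0) := by
    have hs' : s = t - 2 - k := hs
    split_ifs with h1 h2 h2
    · ring
    · exact absurd (by omega : k = t - 2) h2
    · exact absurd (by omega : s = 0) h1
    · ring
  rw [← hval]
  refine hmodel.congr' ?_
  filter_upwards [eventually_ge_atTop (k+2)] with n hn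
  have hne : ((n:ℝ)+1) ≠ 0 := by positivity
  rw [cast_choose_prod n k (by omega)]
  have hw : ((n:ℝ)+1)^(-(t:ℤ)) = (((n:ℝ)+1)⁻¹)^k * (((n:ℝ)+1)⁻¹)^2 * (((n:ℝ)+1)⁻¹)^s := by
    rw [← pow_add, ← pow_add, inv_pow, (by omega : k+2+s = t), zpow_neg, zpow_natCast]
  rw [hw, Finset.prod_div_distrib, Finset.prod_const]
  have hfac : (Nat.factorial k : ℝ) ≠ 0 := by positivity
  field_simp
  rw [Finset.card_range, mul_assoc _ (((n:ℝ) + 1) ^ k), ← mul_pow, mul_one_div_cancel hne, one_pow, mul_one]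

theorem stmt3 (t : ℕ) (ht : 2 ≤ t) (i : ℕ → ℕ)
    (hi : ∀ n, 4 * t + 4 < n → t + 2 ≤ i n ∧ i n ≤ n - t - 2)
    (hodd : ∀ n, 4 * t + 4 < n → Odd (i n + t)) :
    Tendsto (fun n : ℕ => (n : ℝ) ^ 2 * Qtil t n (i n)) atTop
      (nhds (1 / (Nat.factorial (t - 2) : ℝ))) := by
  have hsum : Tendsto (fun n : ℕ => ∑ δ ∈ Icc 1 t,
      (if δ % 2 = (t+1) % 2 then
        (n:ℝ)^2 * (((n:ℝ)+1)^(-(t:ℤ)) * (Nat.choose (n-1) (δ-1) : ℝ)) else 0)) atTop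
      (nhds (∑ δ ∈ Icc 1 t, (if δ % 2 = (t+1) % 2 then
        (if δ - 1 = t - 2 then 1/(Nat.factorial (δ-1) : ℝ) else 0) else 0))) := by
    refine tendsto_finset_sum _ fun δ hδ => ?_
    obtain ⟨hδ1, hδ2⟩ := mem_Icc.mp hδ
    by_cases hpar : δ % 2 = (t+1) % 2
    · simp only [if_pos hpar]
      exact keylim t (δ-1) ht (by omega)
    · simp only [if_neg hpar]
      exact tendsto_const_nhds
  have hval : (∑ δ ∈ Icc 1 t, (if δ % 2 = (t+1) % 2 then
      (if δ - 1 = t - 2 then 1/(Nat.factorial (δ-1) : ℝ) else 0) else 0))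
      = 1 / (Nat.factorial (t-2) : ℝ) := by
    rw [Finset.sum_eq_single (t-1)]
    · rw [if_pos (by omega : (t-1) % 2 = (t+1) % 2),
        if_pos (by omega : t-1-1 = t-2), (by omega : t-1-1 = t-2)]
    · intro δ hδ hne
      obtain ⟨hδ1, hδ2⟩ := mem_Icc.mp hδ
      split_ifs with p1 p2
      · exact absurd (by omega : δ = t - 1) hne
      · rfl
      · rfl
    · intro h
      exact absurd (mem_Icc.mpr ⟨by omega, by omega⟩) h
  rw [← hval]
  refine hsum.congr' ?_
  filter_upwards [eventually_gt_atTop (4*t+4)] with n hn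
  obtain ⟨h1, h2⟩ := hi n hn
  have hio : (i n) % 2 = (t+1) % 2 := by
    have := (Nat.odd_iff).mp (hodd n hn)
    omega
  have h2' : i n + t + 2 ≤ n := by omega
  have hQ : Qtil t n (i n) = ∑ δ ∈ Icc 1 t,
      (if δ % 2 = (i n) % 2 then ((n:ℝ)+1)^(-(t:ℤ)) * (Nat.choose (n-1) (δ-1) : ℝ) else 0) := by
    rw [Qtil, if_neg (by omega)]
    refine Finset.sum_congr rfl fun δ hδ => ?_
    obtain ⟨hδ1, hδ2⟩ := mem_Icc.mp hδ
    exact innerSumEq t n (i n) δ h1 h2' hδ1 hδ2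
  rw [hQ, Finset.mul_sum]
  refine (Finset.sum_congr rfl fun δ hδ => ?_).symm
  rw [hio]
  split_ifs with hpar
  · rfl
  · exact mul_zero _
end

section
/- Fix an integer t ≥ 2 and reals λ ≥ 0, ρ ≥ 0. Then the scaled density-evolution update converges: lim_{n→∞} (n−1)·f_n(λ/(n−1); ρ/(n−1)) = ρ·φ(λ;t−1) + (1/(t−1)!)·φ(λ;t), where the limit is over n large enough that λ/(n−1) and ρ/(n−1) lie in [0,1]. -/
open Finset Filter

/-- Density-evolution map
`f_n(x;p) = ∑_{i=0}^{n−1} C(n−1,i)·x^i·(1−x)^{n−1−i}·(p·P_n(i) + (1−p)·Q_n(i))`. -/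
noncomputable def fDE (t n : ℕ) (x p : ℝ) : ℝ :=
  ∑ i ∈ range n, (Nat.choose (n - 1) i : ℝ) * x ^ i * (1 - x) ^ (n - 1 - i) *
    (p * Pn t n i + (1 - p) * Qn t n i)

/-- Poisson tail probability `φ(λ;k) = ∑_{i=k+1}^∞ (λ^i/i!)·e^{−λ}`. -/
noncomputable def phi (lam : ℝ) (k : ℕ) : ℝ :=
  ∑' i : ℕ, if k + 1 ≤ i then lam ^ i / (Nat.factorial i : ℝ) * Real.exp (-lam) else 0

lemma tendsto_sub_div (c : ℝ) : Tendsto (fun n : ℕ => ((n:ℝ) - c) / n) atTop (nhds 1) := by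
  have h := (tendsto_const_div_atTop_nhds_zero_nat c).const_sub 1
  rw [sub_zero] at h
  refine h.congr' ?_
  filter_upwards [eventually_ge_atTop 1] with n hn
  have : (n:ℝ) ≠ 0 := by positivity
  field_simp

lemma tendsto_choose_div_pow (a l : ℕ) :
    Tendsto (fun n : ℕ => (Nat.choose (n - a) l : ℝ) / (n:ℝ)^l) atTop
      (nhds (1 / (Nat.factorial l : ℝ))) := by
  induction l with
  | zero => simpa using tendsto_const_nhds
  | succ l ih =>
    have key : Tendsto (fun n : ℕ =>
        ((Nat.choose (n - a) l : ℝ) / (n:ℝ)^l) * (((n:ℝ) - (a + l)) / n) * (1/((l:ℝ)+1)))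
        atTop (nhds (1 / (Nat.factorial l : ℝ) * 1 * (1/((l:ℝ)+1)))) :=
      (ih.mul (tendsto_sub_div _)).mul tendsto_const_nhds
    have heq : (1 : ℝ) / (Nat.factorial l : ℝ) * 1 * (1/((l:ℝ)+1))
        = 1 / (Nat.factorial (l+1) : ℝ) := by
      rw [Nat.factorial_succ]
      push_cast
      rw [mul_one]
      rw [div_mul_div_comm, one_mul, mul_comm]
    rw [heq] at key
    refine key.congr' ?_
    filter_upwards [eventually_ge_atTop (a + l + 1)] with n hn
    have h1 : l ≤ n - a := by omega
    have h2 : (n : ℝ) ≠ 0 := Nat.cast_ne_zero.mpr (by omega)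
    have h3 := Nat.choose_succ_right_eq (n - a) l
    have h4 : ((n - a - l : ℕ) : ℝ) = (n:ℝ) - (a + l) := by
      have : ((n - a - l : ℕ) : ℝ) = ((n : ℕ) : ℝ) - ((a + l : ℕ) : ℝ) := by
        rw [← Nat.cast_sub (by omega)]
        congr 1
        omega
      rw [this]; push_cast; ring
    have h5 : ((Nat.choose (n-a) (l+1) : ℕ) : ℝ) * ((l:ℝ)+1)
        = (Nat.choose (n-a) l : ℝ) * ((n:ℝ) - (a + l)) := by
      rw [← h4]
      exact_mod_cast congrArg (Nat.cast (R := ℝ)) h3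
    have h6 : ((l:ℝ)+1) ≠ 0 := by positivity
    field_simp
    linear_combination (-(n:ℝ)^l * n) * h5

lemma tendsto_n_div_succ : Tendsto (fun n : ℕ => (n:ℝ) / ((n:ℝ)+1)) atTop (nhds 1) := by
  have h := (tendsto_one_div_add_atTop_nhds_zero_nat (𝕜 := ℝ)).const_sub 1
  rw [sub_zero] at h
  refine h.congr (fun n => ?_)
  have : (n:ℝ) + 1 ≠ 0 := by positivity
  field_simp
  ring

lemma tendsto_pow_div_pow_lt {j t : ℕ} (h : j < t) :
    Tendsto (fun n : ℕ => (n:ℝ)^j / ((n:ℝ)+1)^t) atTop (nhds 0) := by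
  have h1 : Tendsto (fun n : ℕ => ((n:ℝ)/((n:ℝ)+1))^j * (1/((n:ℝ)+1))^(t-j)) atTop
      (nhds ((1:ℝ)^j * 0^(t-j))) :=
    (tendsto_n_div_succ.pow j).mul (tendsto_one_div_add_atTop_nhds_zero_nat.pow (t-j))
  rw [one_pow, zero_pow (by omega : t - j ≠ 0), mul_zero] at h1
  refine h1.congr (fun n => ?_)
  have h2 : ((n:ℝ)+1)^t = ((n:ℝ)+1)^j * ((n:ℝ)+1)^(t-j) := by
    rw [← pow_add]; congr 1; omega
  rw [div_pow, div_pow, one_pow, h2]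
  rw [div_mul_div_comm, mul_one]

lemma tendsto_pow_div_pow_eq (t : ℕ) :
    Tendsto (fun n : ℕ => (n:ℝ)^t / ((n:ℝ)+1)^t) atTop (nhds 1) := by
  have h1 := tendsto_n_div_succ.pow t
  rw [one_pow] at h1
  refine h1.congr (fun n => ?_)
  rw [div_pow]

lemma tendsto_exp_part (lam : ℝ) (i : ℕ) :
    Tendsto (fun m : ℕ => (1 - lam/(m:ℝ))^(m - i)) atTop (nhds (Real.exp (-lam))) := by
  have h1 : Tendsto (fun m : ℕ => (1 - lam/(m:ℝ))^m) atTop (nhds (Real.exp (-lam))) := by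
    have := Real.tendsto_one_add_div_pow_exp (-lam)
    refine this.congr (fun m => ?_)
    rw [neg_div, ← sub_eq_add_neg]
  have h2 : Tendsto (fun m : ℕ => (1 - lam/(m:ℝ))^i) atTop (nhds 1) := by
    have hb : Tendsto (fun m : ℕ => 1 - lam/(m:ℝ)) atTop (nhds 1) := by
      have := (tendsto_const_div_atTop_nhds_zero_nat lam).const_sub 1
      rwa [sub_zero] at this
    have := hb.pow i
    rwa [one_pow] at this
  have h3 := h1.div h2 (by norm_num)
  rw [div_one] at h3
  refine h3.congr' ?_
  filter_upwards [eventually_ge_atTop (i+1),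
    (tendsto_natCast_atTop_atTop (R := ℝ)).eventually_gt_atTop lam] with m hm hlm
  have hm0 : (0:ℝ) < m := by
    have : (1:ℕ) ≤ m := by omega
    exact_mod_cast Nat.lt_of_lt_of_le Nat.zero_lt_one this
  have hne : 1 - lam/(m:ℝ) ≠ 0 := by
    have : lam / (m:ℝ) < 1 := (div_lt_one hm0).mpr hlm
    linarith
  simp only [Pi.div_apply]
  rw [pow_sub₀ _ hne (by omega : i ≤ m), div_eq_mul_inv]

lemma tendsto_binom_poisson_m (lam : ℝ) (i : ℕ) :
    Tendsto (fun m : ℕ => (Nat.choose m i : ℝ) * (lam/(m:ℝ))^i * (1 - lam/(m:ℝ))^(m - i))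
      atTop (nhds (lam^i / (Nat.factorial i : ℝ) * Real.exp (-lam))) := by
  have h1 : Tendsto (fun m : ℕ => lam^i * ((Nat.choose m i : ℝ) / (m:ℝ)^i)) atTop
      (nhds (lam^i * (1 / (Nat.factorial i : ℝ)))) := by
    have := tendsto_choose_div_pow 0 i
    simp only [Nat.sub_zero] at this
    exact this.const_mul _
  have h2 := h1.mul (tendsto_exp_part lam i)
  have : lam^i * (1 / (Nat.factorial i : ℝ)) * Real.exp (-lam)
      = lam^i / (Nat.factorial i : ℝ) * Real.exp (-lam) := by ring
  rw [this] at h2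
  refine h2.congr (fun m => ?_)
  rw [div_pow]
  ring

lemma tendsto_binom_poisson (lam : ℝ) (i : ℕ) :
    Tendsto (fun n : ℕ => (Nat.choose (n-1) i : ℝ) * (lam/((n:ℝ)-1))^i *
        (1 - lam/((n:ℝ)-1))^(n - 1 - i))
      atTop (nhds (lam^i / (Nat.factorial i : ℝ) * Real.exp (-lam))) := by
  have h := (tendsto_binom_poisson_m lam i).comp (tendsto_sub_atTop_nat 1)
  refine h.congr' ?_
  filter_upwards [eventually_ge_atTop 1] with n hn
  have hc : ((n - 1 : ℕ) : ℝ) = (n:ℝ) - 1 := by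
    rw [Nat.cast_sub hn]; norm_num
  simp only [Function.comp_apply, hc]

lemma tendsto_P_term (t i δ j : ℕ) (hδ1 : 1 ≤ δ) (hδt : δ ≤ t) (hj : j < δ) (hi : δ ≤ i) :
    Tendsto (fun n : ℕ =>
        (((n:ℝ) - (ell i δ j : ℝ)) / (n:ℝ)) * Ahat t n (ell i δ j) * V n i δ j)
      atTop (nhds 0) := by
  set l := ell i δ j with hl
  set d := δ - 1 - j with hd
  have hld : l + d = i + j := by rw [hl, hd]; unfold ell; omega
  have hG : Tendsto (fun n : ℕ =>
      (((n:ℝ) - (l:ℝ)) / (n:ℝ)) * (Nat.choose l (l - j) : ℝ) *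
        ((Nat.choose (n - 0) l : ℝ) / (n:ℝ)^l) *
        ((Nat.choose (n - (l+1)) d : ℝ) / (n:ℝ)^d) *
        (((Nat.choose (n - 1) i : ℝ) / (n:ℝ)^i))⁻¹ *
        ((n:ℝ)^j / ((n:ℝ)+1)^t)) atTop
      (nhds (1 * (Nat.choose l (l - j) : ℝ) * (1 / (Nat.factorial l : ℝ)) *
        (1 / (Nat.factorial d : ℝ)) * (1 / (Nat.factorial i : ℝ))⁻¹ * 0)) := by
    exact (((((tendsto_sub_div (l:ℝ)).mul_const _).mul
      (tendsto_choose_div_pow 0 l)).mul (tendsto_choose_div_pow (l+1) d)).mul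
      ((tendsto_choose_div_pow 1 i).inv₀ (by positivity))).mul
      (tendsto_pow_div_pow_lt (by omega : j < t))
  rw [mul_zero] at hG
  refine hG.congr' ?_
  filter_upwards [eventually_ge_atTop (i + 2*t + 5)] with n hn
  have hln : l ≤ i + t := by rw [hl]; unfold ell; omega
  have hn0 : (n:ℝ) ≠ 0 := Nat.cast_ne_zero.mpr (by omega)
  have hn1 : ((n:ℝ)+1)^t ≠ 0 := by positivity
  have hC3 : (0:ℝ) < (Nat.choose (n-1) i : ℝ) := by
    exact_mod_cast Nat.choose_pos (by omega : i ≤ n - 1)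
  have hz : ((n : ℝ) + 1) ^ (-(t : ℤ)) = (((n:ℝ)+1)^t)⁻¹ := by
    rw [zpow_neg, zpow_natCast]
  have hpow : (n:ℝ)^i = (n:ℝ)^l * (n:ℝ)^d / (n:ℝ)^j := by
    rw [eq_div_iff (by positivity), ← pow_add, ← pow_add, hld]
  simp only [Nat.sub_zero]
  rw [eq_comm, inv_div, hpow]
  unfold Ahat V
  rw [hz, ← hl]
  have hsub : n - (l+1) = n - l - 1 := by omega
  rw [hsub]
  field_simp
  ring

lemma Q_term_eventual_eq (t i δ j : ℕ) (hδ1 : 1 ≤ δ) (hδt : δ ≤ t) (hj : j < δ) (hi : δ ≤ i) :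
    ∀ᶠ n : ℕ in atTop,
      ((n:ℝ) - 1) * ((((ell i δ j : ℝ) + 1) / (n:ℝ)) * Ahat t n (ell i δ j + 1) * V n i δ j)
      = (((n:ℝ) - 1) / (n:ℝ)) * ((ell i δ j : ℝ)+1) *
          (Nat.choose (ell i δ j) (ell i δ j - j) : ℝ) *
          ((Nat.choose (n - 0) (ell i δ j + 1) : ℝ) / (n:ℝ)^(ell i δ j + 1)) *
          ((Nat.choose (n - (ell i δ j + 1)) (δ - 1 - j) : ℝ) / (n:ℝ)^(δ - 1 - j)) *
          (((Nat.choose (n - 1) i : ℝ) / (n:ℝ)^i))⁻¹ *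
          ((n:ℝ)^(j+1) / ((n:ℝ)+1)^t) := by
  set l := ell i δ j with hl
  set d := δ - 1 - j with hd
  have hld : (l + 1) + d = i + (j + 1) := by rw [hl, hd]; unfold ell; omega
  filter_upwards [eventually_ge_atTop (i + 2*t + 5)] with n hn
  have hn0 : (n:ℝ) ≠ 0 := Nat.cast_ne_zero.mpr (by omega)
  have hC3 : (0:ℝ) < (Nat.choose (n-1) i : ℝ) := by
    exact_mod_cast Nat.choose_pos (by omega : i ≤ n - 1)
  have hz : ((n : ℝ) + 1) ^ (-(t : ℤ)) = (((n:ℝ)+1)^t)⁻¹ := by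
    rw [zpow_neg, zpow_natCast]
  have hpow : (n:ℝ)^i = (n:ℝ)^(l+1) * (n:ℝ)^d / (n:ℝ)^(j+1) := by
    rw [eq_div_iff (by positivity), ← pow_add, ← pow_add, hld]
  simp only [Nat.sub_zero]
  rw [eq_comm, inv_div, hpow]
  unfold Ahat V
  rw [hz, ← hl]
  have hsub : n - (l+1) = n - l - 1 := by omega
  rw [hsub]
  field_simp
  ring

lemma tendsto_Q_term_zero (t i δ j : ℕ) (hδ1 : 1 ≤ δ) (hδt : δ ≤ t) (hj : j < δ) (hi : δ ≤ i)
    (hjt : j + 1 < t) :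
    Tendsto (fun n : ℕ => ((n:ℝ) - 1) *
        ((((ell i δ j : ℝ) + 1) / (n:ℝ)) * Ahat t n (ell i δ j + 1) * V n i δ j))
      atTop (nhds 0) := by
  set l := ell i δ j
  have hG : Tendsto (fun n : ℕ =>
      (((n:ℝ) - 1) / (n:ℝ)) * ((l:ℝ)+1) * (Nat.choose l (l - j) : ℝ) *
        ((Nat.choose (n - 0) (l+1) : ℝ) / (n:ℝ)^(l+1)) *
        ((Nat.choose (n - (l+1)) (δ-1-j) : ℝ) / (n:ℝ)^(δ-1-j)) *
        (((Nat.choose (n - 1) i : ℝ) / (n:ℝ)^i))⁻¹ *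
        ((n:ℝ)^(j+1) / ((n:ℝ)+1)^t)) atTop
      (nhds (1 * ((l:ℝ)+1) * (Nat.choose l (l - j) : ℝ) * (1 / (Nat.factorial (l+1) : ℝ)) *
        (1 / (Nat.factorial (δ-1-j) : ℝ)) * (1 / (Nat.factorial i : ℝ))⁻¹ * 0)) :=
    ((((((tendsto_sub_div 1).mul_const _).mul_const _).mul
      (tendsto_choose_div_pow 0 (l+1))).mul (tendsto_choose_div_pow (l+1) (δ-1-j))).mul
      ((tendsto_choose_div_pow 1 i).inv₀ (by positivity))).mul
      (tendsto_pow_div_pow_lt (by omega : j + 1 < t))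
  rw [mul_zero] at hG
  exact hG.congr' ((Q_term_eventual_eq t i δ j hδ1 hδt hj hi).mono fun n h => h.symm)

lemma tendsto_Q_term_main (t i : ℕ) (ht : 1 ≤ t) (hi : t ≤ i) :
    Tendsto (fun n : ℕ => ((n:ℝ) - 1) *
        ((((ell i t (t-1) : ℝ) + 1) / (n:ℝ)) * Ahat t n (ell i t (t-1) + 1) * V n i t (t-1)))
      atTop (nhds (1 / (Nat.factorial (t-1) : ℝ))) := by
  set l := ell i t (t-1) with hl
  have hlv : l = i + t - 1 := by rw [hl]; unfold ell; omega
  have hd : t - 1 - (t-1) = 0 := by omega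
  have hlj : l - (t-1) = i := by omega
  have hG : Tendsto (fun n : ℕ =>
      (((n:ℝ) - 1) / (n:ℝ)) * ((l:ℝ)+1) * (Nat.choose l (l - (t-1)) : ℝ) *
        ((Nat.choose (n - 0) (l+1) : ℝ) / (n:ℝ)^(l+1)) *
        ((Nat.choose (n - (l+1)) (t-1-(t-1)) : ℝ) / (n:ℝ)^(t-1-(t-1))) *
        (((Nat.choose (n - 1) i : ℝ) / (n:ℝ)^i))⁻¹ *
        ((n:ℝ)^((t-1)+1) / ((n:ℝ)+1)^t)) atTop
      (nhds (1 * ((l:ℝ)+1) * (Nat.choose l (l - (t-1)) : ℝ) * (1 / (Nat.factorial (l+1) : ℝ)) *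
        (1 / (Nat.factorial (t-1-(t-1)) : ℝ)) * (1 / (Nat.factorial i : ℝ))⁻¹ * 1)) := by
    have hpeq : (t - 1) + 1 = t := by omega
    refine ((((((tendsto_sub_div 1).mul_const _).mul_const _).mul
      (tendsto_choose_div_pow 0 (l+1))).mul (tendsto_choose_div_pow (l+1) (t-1-(t-1)))).mul
      ((tendsto_choose_div_pow 1 i).inv₀ (by positivity))).mul ?_
    rw [hpeq]
    exact tendsto_pow_div_pow_eq t
  have hval : (1:ℝ) * ((l:ℝ)+1) * (Nat.choose l (l - (t-1)) : ℝ) *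
      (1 / (Nat.factorial (l+1) : ℝ)) * (1 / (Nat.factorial (t-1-(t-1)) : ℝ)) *
      (1 / (Nat.factorial i : ℝ))⁻¹ * 1 = 1 / (Nat.factorial (t-1) : ℝ) := by
    rw [hd, hlj]
    rw [Nat.cast_choose ℝ (by omega : i ≤ l)]
    have hli : l - i = t - 1 := by omega
    rw [hli, Nat.factorial_succ]
    have f1 : (0:ℝ) < (Nat.factorial l : ℝ) := by exact_mod_cast Nat.factorial_pos l
    have f2 : (0:ℝ) < (Nat.factorial i : ℝ) := by exact_mod_cast Nat.factorial_pos i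
    have f3 : (0:ℝ) < (Nat.factorial (t-1) : ℝ) := by exact_mod_cast Nat.factorial_pos (t-1)
    have f4 : (0:ℝ) < (l:ℝ) + 1 := by positivity
    push_cast
    rw [Nat.factorial_zero]
    field_simp
    ring
  rw [hval] at hG
  exact hG.congr' ((Q_term_eventual_eq t i t (t-1) ht le_rfl (by omega) hi).mono fun n h => h.symm)

lemma Pn_def_lt {t n i : ℕ} (h : i < t) : Pn t n i = 0 := by unfold Pn; rw [if_pos h]

lemma Qn_def_le {t n i : ℕ} (h : i ≤ t) : Qn t n i = 0 := by unfold Qn; rw [if_pos h]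

lemma tendsto_Pn (t i : ℕ) (ht : 1 ≤ t) (hi : t ≤ i) :
    Tendsto (fun n : ℕ => Pn t n i) atTop (nhds 1) := by
  have hS : Tendsto (fun n : ℕ => ∑ δ ∈ Icc 1 t, ∑ j ∈ range δ,
      (((n : ℝ) - (ell i δ j : ℝ)) / (n : ℝ)) * Ahat t n (ell i δ j) * V n i δ j) atTop
      (nhds (∑ δ ∈ Icc 1 t, ∑ j ∈ range δ, (0:ℝ))) := by
    refine tendsto_finset_sum _ (fun δ hδ => tendsto_finset_sum _ (fun j hj => ?_))
    rw [mem_Icc] at hδ; rw [mem_range] at hj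
    exact tendsto_P_term t i δ j hδ.1 hδ.2 hj (le_trans hδ.2 hi)
  simp only [Finset.sum_const_zero] at hS
  have h1 : Tendsto (fun n : ℕ => 1 - (∑ δ ∈ Icc 1 t, ∑ j ∈ range δ,
      (((n : ℝ) - (ell i δ j : ℝ)) / (n : ℝ)) * Ahat t n (ell i δ j) * V n i δ j)) atTop
      (nhds 1) := by
    have := hS.const_sub 1
    rwa [sub_zero] at this
  refine h1.congr' ?_
  filter_upwards [eventually_ge_atTop (i + t + 2)] with n hn
  unfold Pn
  rw [if_neg (by omega), if_pos (by omega)]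

lemma tendsto_nQn (t i : ℕ) (ht : 2 ≤ t) (hi : t + 1 ≤ i) :
    Tendsto (fun n : ℕ => ((n:ℝ) - 1) * Qn t n i) atTop
      (nhds (1 / (Nat.factorial (t-1) : ℝ))) := by
  have hval : ∑ δ ∈ Icc 1 t, ∑ j ∈ range δ,
      (if δ = t ∧ j = t - 1 then (1 / (Nat.factorial (t-1) : ℝ)) else 0)
      = 1 / (Nat.factorial (t-1) : ℝ) := by
    have hrow : ∀ δ ∈ Icc 1 t, (∑ j ∈ range δ,
        (if δ = t ∧ j = t - 1 then (1 / (Nat.factorial (t-1) : ℝ)) else 0))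
        = if δ = t then (1 / (Nat.factorial (t-1) : ℝ)) else 0 := by
      intro δ hδ
      rw [mem_Icc] at hδ
      by_cases hδt : δ = t
      · subst hδt
        rw [if_pos rfl]
        have : ∀ j ∈ range δ, (if δ = δ ∧ j = δ - 1 then (1 / (Nat.factorial (δ-1) : ℝ)) else 0)
            = if j = δ - 1 then (1 / (Nat.factorial (δ-1) : ℝ)) else 0 := by
          intro j _; simp
        rw [Finset.sum_congr rfl this, Finset.sum_ite_eq' (range δ) (δ-1)]
        rw [if_pos (mem_range.mpr (by omega))]
      · rw [if_neg hδt]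
        refine Finset.sum_eq_zero (fun j _ => ?_)
        rw [if_neg (by tauto)]
    rw [Finset.sum_congr rfl hrow, Finset.sum_ite_eq' (Icc 1 t) t]
    rw [if_pos (mem_Icc.mpr ⟨by omega, le_rfl⟩)]
  have hS : Tendsto (fun n : ℕ => ∑ δ ∈ Icc 1 t, ∑ j ∈ range δ,
      ((n:ℝ) - 1) * ((((ell i δ j : ℝ) + 1) / (n:ℝ)) * Ahat t n (ell i δ j + 1) * V n i δ j))
      atTop (nhds (1 / (Nat.factorial (t-1) : ℝ))) := by
    rw [← hval]
    refine tendsto_finset_sum _ (fun δ hδ => tendsto_finset_sum _ (fun j hj => ?_))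
    rw [mem_Icc] at hδ; rw [mem_range] at hj
    by_cases hc : δ = t ∧ j = t - 1
    · obtain ⟨h1, h2⟩ := hc
      rw [if_pos ⟨h1, h2⟩, h1, h2]
      exact tendsto_Q_term_main t i (by omega) (by omega)
    · rw [if_neg hc]
      exact tendsto_Q_term_zero t i δ j hδ.1 hδ.2 hj (by omega) (by omega)
  refine hS.congr' ?_
  filter_upwards [eventually_ge_atTop (i + t + 1)] with n hn
  unfold Qn
  rw [if_neg (by omega), if_pos (by omega), Finset.mul_sum]
  refine Finset.sum_congr rfl (fun δ _ => ?_)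
  rw [Finset.mul_sum]

lemma tendsto_Qn_zero (t i : ℕ) (ht : 2 ≤ t) (hi : t + 1 ≤ i) :
    Tendsto (fun n : ℕ => Qn t n i) atTop (nhds 0) := by
  have hinv : Tendsto (fun n : ℕ => ((n:ℝ) - 1)⁻¹) atTop (nhds 0) := by
    refine Tendsto.inv_tendsto_atTop ?_
    have := tendsto_atTop_add_const_right atTop (-1 : ℝ) (tendsto_natCast_atTop_atTop (R := ℝ))
    refine this.congr (fun n => ?_); ring
  have h := hinv.mul (tendsto_nQn t i ht hi)
  rw [zero_mul] at h
  refine h.congr' ?_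
  filter_upwards [eventually_ge_atTop 2] with n hn
  have : ((n:ℝ) - 1) ≠ 0 := by
    have : (2:ℝ) ≤ (n:ℝ) := by exact_mod_cast hn
    linarith
  field_simp

noncomputable def Bw (lam : ℝ) (n i : ℕ) : ℝ :=
  (Nat.choose (n-1) i : ℝ) * (lam/((n:ℝ)-1))^i * (1 - lam/((n:ℝ)-1))^(n-1-i)

noncomputable def summand (t : ℕ) (lam ρ : ℝ) (n i : ℕ) : ℝ :=
  if i < n then Bw lam n i * (ρ * Pn t n i + (((n:ℝ)-1) - ρ) * Qn t n i) else 0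

noncomputable def glim (t : ℕ) (lam ρ : ℝ) (i : ℕ) : ℝ :=
  lam^i / (Nat.factorial i : ℝ) * Real.exp (-lam) *
    ((if t ≤ i then ρ else 0) + (if t+1 ≤ i then (1/(Nat.factorial (t-1) : ℝ)) else 0))

lemma tendsto_summand (t : ℕ) (ht : 2 ≤ t) (lam ρ : ℝ) (i : ℕ) :
    Tendsto (fun n : ℕ => summand t lam ρ n i) atTop (nhds (glim t lam ρ i)) := by
  rcases lt_or_ge i t with hit | hit
  · have hg : glim t lam ρ i = 0 := by
      unfold glim; rw [if_neg (by omega), if_neg (by omega)]; ring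
    rw [hg]
    refine tendsto_const_nhds.congr' ?_
    filter_upwards [eventually_gt_atTop i] with n hn
    unfold summand
    rw [if_pos hn, Pn_def_lt hit, Qn_def_le (by omega)]
    ring
  rcases lt_or_ge i (t+1) with hit2 | hit2
  · -- i = t
    have hg : glim t lam ρ i = lam^i / (Nat.factorial i : ℝ) * Real.exp (-lam) * (ρ * 1) := by
      unfold glim; rw [if_pos hit, if_neg (by omega)]; ring
    rw [hg]
    have h := (tendsto_binom_poisson lam i).mul ((tendsto_Pn t i (by omega) hit).const_mul ρ)
    refine h.congr' ?_
    filter_upwards [eventually_gt_atTop i] with n hn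
    unfold summand Bw
    rw [if_pos hn, Qn_def_le (by omega)]
    ring
  · have hg : glim t lam ρ i = lam^i / (Nat.factorial i : ℝ) * Real.exp (-lam) *
        (ρ * 1 + (1 / (Nat.factorial (t-1) : ℝ) - ρ * 0)) := by
      unfold glim; rw [if_pos hit, if_pos hit2]; ring
    rw [hg]
    have h := (tendsto_binom_poisson lam i).mul
      (((tendsto_Pn t i (by omega) hit).const_mul ρ).add
        ((tendsto_nQn t i ht hit2).sub ((tendsto_Qn_zero t i ht hit2).const_mul ρ)))
    refine h.congr' ?_
    filter_upwards [eventually_gt_atTop i] with n hn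
    unfold summand Bw
    rw [if_pos hn]
    ring

lemma choose_le_two_pow_real (a b : ℕ) : (Nat.choose a b : ℝ) ≤ 2^a := by
  rcases le_or_gt b a with h | h
  · have : Nat.choose a b ≤ 2^a := by
      calc Nat.choose a b ≤ ∑ m ∈ range (a+1), Nat.choose a m :=
            Finset.single_le_sum (fun m _ => Nat.zero_le _) (mem_range.mpr (by omega))
        _ = 2^a := Nat.sum_range_choose a
    calc (Nat.choose a b : ℝ) ≤ ((2^a : ℕ) : ℝ) := by exact_mod_cast this
      _ = 2^a := by push_cast; ring
  · rw [Nat.choose_eq_zero_of_lt h]; simp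

lemma choose_le_pow_real {m n : ℕ} (d : ℕ) (h : m ≤ n) : (Nat.choose m d : ℝ) ≤ (n:ℝ)^d := by
  calc (Nat.choose m d : ℝ) ≤ ((m^d : ℕ) : ℝ) := by exact_mod_cast Nat.choose_le_pow m d
    _ ≤ ((n^d : ℕ) : ℝ) := by exact_mod_cast Nat.pow_le_pow_left h d
    _ = (n:ℝ)^d := by push_cast; ring

lemma choose_le_pow_div_fact_real {b : ℕ} (n a : ℕ) (hb : b ≤ a) :
    (Nat.choose n a : ℝ) ≤ (n:ℝ)^a / (Nat.factorial b : ℝ) := by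
  have h1 : (Nat.choose n a : ℝ) ≤ (n:ℝ)^a / (Nat.factorial a : ℝ) := by
    have := Nat.choose_le_pow_div (α := ℝ) a n
    simpa using this
  refine h1.trans ?_
  have hf : (Nat.factorial b : ℝ) ≤ (Nat.factorial a : ℝ) := by
    exact_mod_cast Nat.factorial_le hb
  have hb0 : (0:ℝ) < (Nat.factorial b : ℝ) := by exact_mod_cast Nat.factorial_pos b
  exact div_le_div_of_nonneg_left (by positivity) hb0 hf

lemma pow_ratio_bound {n i j t l d : ℕ} (hld : l + d = i + j) (hj : j ≤ t) (hti : t ≤ i + j)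
    (hn : 2 ≤ n) :
    (n:ℝ)^l * (n:ℝ)^d * (((n:ℝ)^t)⁻¹ * ((((n:ℝ)-1)^i)⁻¹)) ≤ 2^i := by
  have hn1 : (1:ℝ) ≤ (n:ℝ) := by exact_mod_cast (by omega : 1 ≤ n)
  have hn0 : (0:ℝ) < (n:ℝ) := by linarith
  have hm1 : (0:ℝ) < (n:ℝ) - 1 := by
    have : (2:ℝ) ≤ (n:ℝ) := by exact_mod_cast hn
    linarith
  have h1 : (n:ℝ)^l * (n:ℝ)^d = (n:ℝ)^(i+j) := by rw [← pow_add, hld]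
  have h2 : (n:ℝ)^(i+j) = (n:ℝ)^((i+j)-t) * (n:ℝ)^t := by rw [← pow_add]; congr 1; omega
  have h3 : (n:ℝ)^((i+j)-t) ≤ (n:ℝ)^i := pow_le_pow_right₀ hn1 (by omega)
  have h4 : (n:ℝ)^i ≤ 2^i * ((n:ℝ)-1)^i := by
    rw [← mul_pow]
    refine pow_le_pow_left₀ (by positivity) ?_ i
    have : (2:ℝ) ≤ (n:ℝ) := by exact_mod_cast hn
    linarith
  rw [h1, h2]
  have hre : (n:ℝ)^((i+j)-t) * (n:ℝ)^t * (((n:ℝ)^t)⁻¹ * ((((n:ℝ)-1)^i)⁻¹))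
      = (n:ℝ)^((i+j)-t) * (((n:ℝ)-1)^i)⁻¹ := by
    field_simp
  rw [hre]
  calc (n:ℝ)^((i+j)-t) * (((n:ℝ)-1)^i)⁻¹
      ≤ (2^i * ((n:ℝ)-1)^i) * (((n:ℝ)-1)^i)⁻¹ :=
        mul_le_mul_of_nonneg_right (h3.trans h4) (by positivity)
    _ = 2^i := by field_simp

lemma Bw_nonneg {lam : ℝ} (hlam : 0 ≤ lam) {n : ℕ} (i : ℕ) (hn : 2 ≤ n)
    (hlamn : lam ≤ (n:ℝ) - 1) : 0 ≤ Bw lam n i := by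
  have hm1 : (0:ℝ) < (n:ℝ) - 1 := by
    have : (2:ℝ) ≤ (n:ℝ) := by exact_mod_cast hn
    linarith
  have hx : 0 ≤ lam / ((n:ℝ)-1) := by positivity
  have hx1 : lam / ((n:ℝ)-1) ≤ 1 := by rw [div_le_one hm1]; linarith
  unfold Bw
  have : (0:ℝ) ≤ 1 - lam/((n:ℝ)-1) := by linarith
  positivity

lemma Bw_le {lam : ℝ} (hlam : 0 ≤ lam) {n : ℕ} (i : ℕ) (hn : 2 ≤ n)
    (hlamn : lam ≤ (n:ℝ) - 1) :
    Bw lam n i ≤ lam^i / (Nat.factorial i : ℝ) := by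
  have hm1 : (0:ℝ) < (n:ℝ) - 1 := by
    have : (2:ℝ) ≤ (n:ℝ) := by exact_mod_cast hn
    linarith
  have hx : 0 ≤ lam / ((n:ℝ)-1) := by positivity
  have hx1 : lam / ((n:ℝ)-1) ≤ 1 := by rw [div_le_one hm1]; linarith
  have hy : (1 - lam/((n:ℝ)-1))^(n-1-i) ≤ 1 :=
    pow_le_one₀ (by linarith) (by linarith)
  have hcast : ((n-1 : ℕ) : ℝ) = (n:ℝ) - 1 := by
    rw [Nat.cast_sub (by omega)]; norm_num
  have hcc : (Nat.choose (n-1) i : ℝ) ≤ ((n:ℝ)-1)^i / (Nat.factorial i : ℝ) := by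
    have := Nat.choose_le_pow_div (α := ℝ) i (n-1)
    rw [hcast] at this
    simpa using this
  unfold Bw
  calc (Nat.choose (n-1) i : ℝ) * (lam/((n:ℝ)-1))^i * (1 - lam/((n:ℝ)-1))^(n-1-i)
      ≤ (Nat.choose (n-1) i : ℝ) * (lam/((n:ℝ)-1))^i * 1 := by
        refine mul_le_mul_of_nonneg_left hy (by positivity)
    _ = (Nat.choose (n-1) i : ℝ) * (lam^i/((n:ℝ)-1)^i) := by rw [mul_one, div_pow]
    _ ≤ (((n:ℝ)-1)^i / (Nat.factorial i : ℝ)) * (lam^i/((n:ℝ)-1)^i) := by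
        refine mul_le_mul_of_nonneg_right hcc (by positivity)
    _ = lam^i / (Nat.factorial i : ℝ) := by field_simp

lemma P_term_bound {lam : ℝ} (hlam : 0 ≤ lam) (t i δ j n : ℕ) (hδ1 : 1 ≤ δ) (hδt : δ ≤ t)
    (hj : j < δ) (ht2 : 2 ≤ t) (hti : t ≤ i) (hin : i + t + 2 ≤ n) (hlamn : lam ≤ (n:ℝ)-1) :
    Bw lam n i * ((((n:ℝ) - (ell i δ j : ℝ)) / (n:ℝ)) * Ahat t n (ell i δ j) * V n i δ j)
      ≤ 2^t * (8*lam+1)^i / (Nat.factorial (i-t) : ℝ) := by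
  set l := ell i δ j with hldef
  set d := δ - 1 - j with hddef
  have hl1 : i - t ≤ l := by rw [hldef]; unfold ell; omega
  have hl2 : l ≤ i + t := by rw [hldef]; unfold ell; omega
  have hld : (l + d) = i + j := by rw [hldef, hddef]; unfold ell; omega
  have hn2 : 2 ≤ n := by omega
  have hn0 : (0:ℝ) < (n:ℝ) := by exact_mod_cast (by omega : 0 < n)
  have hm1 : (0:ℝ) < (n:ℝ) - 1 := by
    have : (2:ℝ) ≤ (n:ℝ) := by exact_mod_cast hn2
    linarith
  have hC : (0:ℝ) < (Nat.choose (n-1) i : ℝ) := by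
    exact_mod_cast Nat.choose_pos (by omega : i ≤ n - 1)
  set x := lam / ((n:ℝ)-1) with hxdef
  have hx : 0 ≤ x := by rw [hxdef]; positivity
  have hx1 : x ≤ 1 := by rw [hxdef, div_le_one hm1]; linarith
  set k := n - 1 - i with hkdef
  have heq : Bw lam n i * ((((n:ℝ) - (l : ℝ)) / (n:ℝ)) * Ahat t n l * V n i δ j)
      = x^i * ((1-x)^k * (((n:ℝ) - (l:ℝ))/(n:ℝ)) * ((((n:ℝ)+1)^t)⁻¹)) *
        ((Nat.choose l (l-j) : ℝ) * (Nat.choose n l : ℝ) * (Nat.choose (n-l-1) d : ℝ)) := by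
    have hz : ((n : ℝ) + 1) ^ (-(t : ℤ)) = (((n:ℝ)+1)^t)⁻¹ := by
      rw [zpow_neg, zpow_natCast]
    unfold Bw Ahat V
    rw [hz, ← hldef, ← hddef, ← hxdef, ← hkdef]
    field_simp
  rw [heq]
  -- bound the middle group by (n^t)⁻¹
  have b2 : (1-x)^k ≤ 1 := pow_le_one₀ (by linarith) (by linarith)
  have b2n : (0:ℝ) ≤ (1-x)^k := pow_nonneg (by linarith) k
  have b3 : ((n:ℝ) - (l:ℝ))/(n:ℝ) ≤ 1 := by
    rw [div_le_one hn0]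
    have : (0:ℝ) ≤ (l:ℝ) := by positivity
    linarith
  have b3n : (0:ℝ) ≤ ((n:ℝ) - (l:ℝ))/(n:ℝ) := by
    have : (l:ℝ) ≤ (n:ℝ) := by exact_mod_cast (by omega : l ≤ n)
    have := sub_nonneg.mpr this
    positivity
  have b4 : (((n:ℝ)+1)^t)⁻¹ ≤ ((n:ℝ)^t)⁻¹ := by
    refine inv_anti₀ (by positivity) ?_
    exact pow_le_pow_left₀ (by positivity) (by linarith) t
  have b4n : (0:ℝ) ≤ (((n:ℝ)+1)^t)⁻¹ := by positivity
  have bM : (1-x)^k * (((n:ℝ) - (l:ℝ))/(n:ℝ)) * ((((n:ℝ)+1)^t)⁻¹) ≤ ((n:ℝ)^t)⁻¹ := by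
    have h1 : (1-x)^k * (((n:ℝ) - (l:ℝ))/(n:ℝ)) ≤ 1 :=
      mul_le_one₀ b2 b3n b3
    calc (1-x)^k * (((n:ℝ) - (l:ℝ))/(n:ℝ)) * ((((n:ℝ)+1)^t)⁻¹)
        ≤ 1 * ((((n:ℝ)+1)^t)⁻¹) := mul_le_mul_of_nonneg_right h1 b4n
      _ = (((n:ℝ)+1)^t)⁻¹ := one_mul _
      _ ≤ ((n:ℝ)^t)⁻¹ := b4
  have bMn : (0:ℝ) ≤ (1-x)^k * (((n:ℝ) - (l:ℝ))/(n:ℝ)) * ((((n:ℝ)+1)^t)⁻¹) :=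
    mul_nonneg (mul_nonneg b2n b3n) b4n
  -- bound the right group
  have b5 : (Nat.choose l (l-j) : ℝ) ≤ 2^(i+t) := by
    refine (choose_le_two_pow_real l (l-j)).trans ?_
    exact pow_le_pow_right₀ one_le_two hl2
  have b6 : (Nat.choose n l : ℝ) ≤ (n:ℝ)^l / (Nat.factorial (i-t) : ℝ) :=
    choose_le_pow_div_fact_real n l hl1
  have b7 : (Nat.choose (n-l-1) d : ℝ) ≤ (n:ℝ)^d := choose_le_pow_real d (by omega)
  have bR : (Nat.choose l (l-j) : ℝ) * (Nat.choose n l : ℝ) * (Nat.choose (n-l-1) d : ℝ)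
      ≤ 2^(i+t) * ((n:ℝ)^l / (Nat.factorial (i-t) : ℝ)) * (n:ℝ)^d := by
    refine mul_le_mul (mul_le_mul b5 b6 (by positivity) (by positivity)) b7
      (by positivity) ?_
    have : (0:ℝ) < (Nat.factorial (i-t) : ℝ) := by exact_mod_cast Nat.factorial_pos _
    positivity
  have bRn : (0:ℝ) ≤ (Nat.choose l (l-j) : ℝ) * (Nat.choose n l : ℝ) *
      (Nat.choose (n-l-1) d : ℝ) := by positivity
  have hf0 : (0:ℝ) < (Nat.factorial (i-t) : ℝ) := by exact_mod_cast Nat.factorial_pos _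
  have bRn' : (0:ℝ) ≤ 2^(i+t) * ((n:ℝ)^l / (Nat.factorial (i-t) : ℝ)) * (n:ℝ)^d := by
    positivity
  have step1 : x^i * ((1-x)^k * (((n:ℝ) - (l:ℝ))/(n:ℝ)) * ((((n:ℝ)+1)^t)⁻¹)) *
        ((Nat.choose l (l-j) : ℝ) * (Nat.choose n l : ℝ) * (Nat.choose (n-l-1) d : ℝ))
      ≤ x^i * (((n:ℝ)^t)⁻¹ * (2^(i+t) * ((n:ℝ)^l / (Nat.factorial (i-t) : ℝ)) * (n:ℝ)^d)) := by
    rw [mul_assoc]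
    refine mul_le_mul_of_nonneg_left ?_ (pow_nonneg hx i)
    exact mul_le_mul bM bR bRn (by positivity)
  refine step1.trans ?_
  have hxi : x^i = lam^i * ((((n:ℝ)-1)^i)⁻¹) := by
    rw [hxdef, div_pow, div_eq_mul_inv]
  have hre : x^i * (((n:ℝ)^t)⁻¹ * (2^(i+t) * ((n:ℝ)^l / (Nat.factorial (i-t) : ℝ)) * (n:ℝ)^d))
      = (lam^i * 2^(i+t) * ((Nat.factorial (i-t) : ℝ))⁻¹) *
        ((n:ℝ)^l * (n:ℝ)^d * (((n:ℝ)^t)⁻¹ * ((((n:ℝ)-1)^i)⁻¹))) := by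
    rw [hxi]
    field_simp
  rw [hre]
  have hrb := pow_ratio_bound hld (by omega : j ≤ t) (by omega : t ≤ i + j) hn2
  have hcn : (0:ℝ) ≤ lam^i * 2^(i+t) * ((Nat.factorial (i-t) : ℝ))⁻¹ := by
    have : (0:ℝ) ≤ lam^i := pow_nonneg hlam i
    positivity
  calc (lam^i * 2^(i+t) * ((Nat.factorial (i-t) : ℝ))⁻¹) *
        ((n:ℝ)^l * (n:ℝ)^d * (((n:ℝ)^t)⁻¹ * ((((n:ℝ)-1)^i)⁻¹)))
      ≤ (lam^i * 2^(i+t) * ((Nat.factorial (i-t) : ℝ))⁻¹) * 2^i :=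
        mul_le_mul_of_nonneg_left hrb hcn
    _ = 2^t * (2*(2*lam))^i / (Nat.factorial (i-t) : ℝ) := by
        rw [pow_add, mul_pow, mul_pow]
        field_simp
    _ ≤ 2^t * (8*lam+1)^i / (Nat.factorial (i-t) : ℝ) := by
        have h48 : (2*(2*lam))^i ≤ (8*lam+1)^i :=
          pow_le_pow_left₀ (by linarith) (by linarith) i
        have h2 := mul_le_mul_of_nonneg_left h48 (by positivity : (0:ℝ) ≤ (2:ℝ)^t)
        exact (div_le_div_iff_of_pos_right hf0).mpr h2

lemma Q_term_bound {lam : ℝ} (hlam : 0 ≤ lam) (t i δ j n : ℕ) (hδ1 : 1 ≤ δ) (hδt : δ ≤ t)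
    (hj : j < δ) (ht2 : 2 ≤ t) (hti : t + 1 ≤ i) (hin : i + t + 1 ≤ n)
    (hlamn : lam ≤ (n:ℝ)-1) :
    Bw lam n i * (((n:ℝ)-1) *
        ((((ell i δ j : ℝ) + 1) / (n:ℝ)) * Ahat t n (ell i δ j + 1) * V n i δ j))
      ≤ 4^t * (8*lam+1)^i / (Nat.factorial (i-t) : ℝ) := by
  set l := ell i δ j with hldef
  set d := δ - 1 - j with hddef
  have hl1 : i - t ≤ l + 1 := by rw [hldef]; unfold ell; omega
  have hl2 : l ≤ i + t - 1 := by rw [hldef]; unfold ell; omega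
  have hl2' : l ≤ i + t := by omega
  have hld : ((l+1) + d) = i + (j+1) := by rw [hldef, hddef]; unfold ell; omega
  have hn2 : 2 ≤ n := by omega
  have hn0 : (0:ℝ) < (n:ℝ) := by exact_mod_cast (by omega : 0 < n)
  have hm1 : (0:ℝ) < (n:ℝ) - 1 := by
    have : (2:ℝ) ≤ (n:ℝ) := by exact_mod_cast hn2
    linarith
  have hC : (0:ℝ) < (Nat.choose (n-1) i : ℝ) := by
    exact_mod_cast Nat.choose_pos (by omega : i ≤ n - 1)
  set x := lam / ((n:ℝ)-1) with hxdef
  have hx : 0 ≤ x := by rw [hxdef]; positivity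
  have hx1 : x ≤ 1 := by rw [hxdef, div_le_one hm1]; linarith
  set k := n - 1 - i with hkdef
  have heq : Bw lam n i * (((n:ℝ)-1) * ((((l : ℝ)+1) / (n:ℝ)) * Ahat t n (l+1) * V n i δ j))
      = x^i * ((1-x)^k * (((n:ℝ)-1) * (((l:ℝ)+1)/(n:ℝ))) * ((((n:ℝ)+1)^t)⁻¹)) *
        ((Nat.choose l (l-j) : ℝ) * (Nat.choose n (l+1) : ℝ) * (Nat.choose (n-l-1) d : ℝ)) := by
    have hz : ((n : ℝ) + 1) ^ (-(t : ℤ)) = (((n:ℝ)+1)^t)⁻¹ := by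
      rw [zpow_neg, zpow_natCast]
    unfold Bw Ahat V
    rw [hz, ← hldef, ← hddef, ← hxdef, ← hkdef]
    field_simp
  rw [heq]
  have b2 : (1-x)^k ≤ 1 := pow_le_one₀ (by linarith) (by linarith)
  have b2n : (0:ℝ) ≤ (1-x)^k := pow_nonneg (by linarith) k
  have b3 : ((n:ℝ)-1) * (((l:ℝ)+1)/(n:ℝ)) ≤ 2^(i+t) := by
    have h1 : ((n:ℝ)-1) * (((l:ℝ)+1)/(n:ℝ)) = ((l:ℝ)+1) * (((n:ℝ)-1)/(n:ℝ)) := by ring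
    have h2 : ((n:ℝ)-1)/(n:ℝ) ≤ 1 := by rw [div_le_one hn0]; linarith
    have h3 : ((l:ℝ)+1) * (((n:ℝ)-1)/(n:ℝ)) ≤ ((l:ℝ)+1) * 1 := by
      refine mul_le_mul_of_nonneg_left h2 (by positivity)
    have h4 : (l:ℝ)+1 ≤ ((i+t:ℕ):ℝ) := by
      have : l + 1 ≤ i + t := by omega
      exact_mod_cast this
    have h5 : ((i+t:ℕ):ℝ) ≤ 2^(i+t) := by
      calc ((i+t:ℕ):ℝ) ≤ ((2^(i+t) : ℕ) : ℝ) := by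
            exact_mod_cast (Nat.lt_two_pow_self (n := i+t)).le
        _ = 2^(i+t) := by push_cast; ring
    rw [h1]
    calc ((l:ℝ)+1) * (((n:ℝ)-1)/(n:ℝ)) ≤ ((l:ℝ)+1) * 1 := h3
      _ = (l:ℝ)+1 := mul_one _
      _ ≤ 2^(i+t) := h4.trans h5
  have b3n : (0:ℝ) ≤ ((n:ℝ)-1) * (((l:ℝ)+1)/(n:ℝ)) := by positivity
  have b4 : (((n:ℝ)+1)^t)⁻¹ ≤ ((n:ℝ)^t)⁻¹ := by
    refine inv_anti₀ (by positivity) ?_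
    exact pow_le_pow_left₀ (by positivity) (by linarith) t
  have b4n : (0:ℝ) ≤ (((n:ℝ)+1)^t)⁻¹ := by positivity
  have bM : (1-x)^k * (((n:ℝ)-1) * (((l:ℝ)+1)/(n:ℝ))) * ((((n:ℝ)+1)^t)⁻¹)
      ≤ 2^(i+t) * ((n:ℝ)^t)⁻¹ := by
    have h1 : (1-x)^k * (((n:ℝ)-1) * (((l:ℝ)+1)/(n:ℝ))) ≤ 1 * 2^(i+t) :=
      mul_le_mul b2 b3 b3n zero_le_one
    rw [one_mul] at h1
    exact mul_le_mul h1 b4 b4n (by positivity)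
  have bMn : (0:ℝ) ≤ (1-x)^k * (((n:ℝ)-1) * (((l:ℝ)+1)/(n:ℝ))) * ((((n:ℝ)+1)^t)⁻¹) :=
    mul_nonneg (mul_nonneg b2n b3n) b4n
  have b5 : (Nat.choose l (l-j) : ℝ) ≤ 2^(i+t) := by
    refine (choose_le_two_pow_real l (l-j)).trans ?_
    exact pow_le_pow_right₀ one_le_two hl2'
  have b6 : (Nat.choose n (l+1) : ℝ) ≤ (n:ℝ)^(l+1) / (Nat.factorial (i-t) : ℝ) :=
    choose_le_pow_div_fact_real n (l+1) hl1
  have b7 : (Nat.choose (n-l-1) d : ℝ) ≤ (n:ℝ)^d := choose_le_pow_real d (by omega)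
  have hf0 : (0:ℝ) < (Nat.factorial (i-t) : ℝ) := by exact_mod_cast Nat.factorial_pos _
  have bR : (Nat.choose l (l-j) : ℝ) * (Nat.choose n (l+1) : ℝ) * (Nat.choose (n-l-1) d : ℝ)
      ≤ 2^(i+t) * ((n:ℝ)^(l+1) / (Nat.factorial (i-t) : ℝ)) * (n:ℝ)^d := by
    refine mul_le_mul (mul_le_mul b5 b6 (by positivity) (by positivity)) b7
      (by positivity) (by positivity)
  have bRn : (0:ℝ) ≤ (Nat.choose l (l-j) : ℝ) * (Nat.choose n (l+1) : ℝ) *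
      (Nat.choose (n-l-1) d : ℝ) := by positivity
  have step1 : x^i * ((1-x)^k * (((n:ℝ)-1) * (((l:ℝ)+1)/(n:ℝ))) * ((((n:ℝ)+1)^t)⁻¹)) *
        ((Nat.choose l (l-j) : ℝ) * (Nat.choose n (l+1) : ℝ) * (Nat.choose (n-l-1) d : ℝ))
      ≤ x^i * ((2^(i+t) * ((n:ℝ)^t)⁻¹) *
          (2^(i+t) * ((n:ℝ)^(l+1) / (Nat.factorial (i-t) : ℝ)) * (n:ℝ)^d)) := by
    rw [mul_assoc]
    refine mul_le_mul_of_nonneg_left ?_ (pow_nonneg hx i)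
    exact mul_le_mul bM bR bRn (by positivity)
  refine step1.trans ?_
  have hxi : x^i = lam^i * ((((n:ℝ)-1)^i)⁻¹) := by
    rw [hxdef, div_pow, div_eq_mul_inv]
  have hre : x^i * ((2^(i+t) * ((n:ℝ)^t)⁻¹) *
        (2^(i+t) * ((n:ℝ)^(l+1) / (Nat.factorial (i-t) : ℝ)) * (n:ℝ)^d))
      = (lam^i * 2^(i+t) * 2^(i+t) * ((Nat.factorial (i-t) : ℝ))⁻¹) *
        ((n:ℝ)^(l+1) * (n:ℝ)^d * (((n:ℝ)^t)⁻¹ * ((((n:ℝ)-1)^i)⁻¹))) := by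
    rw [hxi]
    field_simp
  rw [hre]
  have hrb := pow_ratio_bound hld (by omega : j + 1 ≤ t) (by omega : t ≤ i + (j+1)) hn2
  have hcn : (0:ℝ) ≤ lam^i * 2^(i+t) * 2^(i+t) * ((Nat.factorial (i-t) : ℝ))⁻¹ := by
    have : (0:ℝ) ≤ lam^i := pow_nonneg hlam i
    positivity
  calc (lam^i * 2^(i+t) * 2^(i+t) * ((Nat.factorial (i-t) : ℝ))⁻¹) *
        ((n:ℝ)^(l+1) * (n:ℝ)^d * (((n:ℝ)^t)⁻¹ * ((((n:ℝ)-1)^i)⁻¹)))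
      ≤ (lam^i * 2^(i+t) * 2^(i+t) * ((Nat.factorial (i-t) : ℝ))⁻¹) * 2^i :=
        mul_le_mul_of_nonneg_left hrb hcn
    _ = 4^t * (2*(2*(2*lam)))^i / (Nat.factorial (i-t) : ℝ) := by
        rw [pow_add, mul_pow, mul_pow, mul_pow,
          show (4:ℝ) = 2*2 by norm_num, mul_pow]
        field_simp
    _ ≤ 4^t * (8*lam+1)^i / (Nat.factorial (i-t) : ℝ) := by
        have h48 : (2*(2*(2*lam)))^i ≤ (8*lam+1)^i :=
          pow_le_pow_left₀ (by linarith) (by linarith) i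
        have h2 := mul_le_mul_of_nonneg_left h48 (by positivity : (0:ℝ) ≤ (4:ℝ)^t)
        exact (div_le_div_iff_of_pos_right hf0).mpr h2

lemma Qn_nonneg (t n i : ℕ) : 0 ≤ Qn t n i := by
  unfold Qn
  split
  · exact le_refl 0
  split
  · refine Finset.sum_nonneg (fun δ hδ => Finset.sum_nonneg (fun j hj => ?_))
    have h2 : (0:ℝ) ≤ Ahat t n (ell i δ j + 1) := by
      unfold Ahat
      refine mul_nonneg ?_ (by positivity)
      positivity
    have h3 : (0:ℝ) ≤ V n i δ j := by unfold V; positivity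
    exact mul_nonneg (mul_nonneg (by positivity) h2) h3
  · exact zero_le_one

lemma P_sum_nonneg (t n i : ℕ) (hli : ∀ δ j, 1 ≤ δ → δ ≤ t → j < δ → ell i δ j ≤ n) :
    0 ≤ ∑ δ ∈ Icc 1 t, ∑ j ∈ range δ,
      (((n : ℝ) - (ell i δ j : ℝ)) / (n : ℝ)) * Ahat t n (ell i δ j) * V n i δ j := by
  refine Finset.sum_nonneg (fun δ hδ => Finset.sum_nonneg (fun j hj => ?_))
  rw [mem_Icc] at hδ; rw [mem_range] at hj
  have h1 : (0:ℝ) ≤ ((n : ℝ) - (ell i δ j : ℝ)) / (n : ℝ) := by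
    refine div_nonneg (sub_nonneg.mpr ?_) (by positivity)
    exact_mod_cast hli δ j hδ.1 hδ.2 hj
  have h2 : (0:ℝ) ≤ Ahat t n (ell i δ j) := by
    unfold Ahat
    refine mul_nonneg ?_ (by positivity)
    positivity
  have h3 : (0:ℝ) ≤ V n i δ j := by
    unfold V
    positivity
  exact mul_nonneg (mul_nonneg h1 h2) h3

lemma pois_le_K0 {lam : ℝ} (hlam : 0 ≤ lam) (t i : ℕ) :
    lam^i / (Nat.factorial i : ℝ) ≤ (8*lam+1)^i / (Nat.factorial (i-t) : ℝ) := by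
  refine div_le_div₀ (by positivity) (pow_le_pow_left₀ hlam (by linarith) i) ?_ ?_
  · exact_mod_cast Nat.factorial_pos (i-t)
  · exact_mod_cast Nat.factorial_le (by omega : i - t ≤ i)

lemma Bw_Pn_bound {lam : ℝ} (hlam : 0 ≤ lam) (t i n : ℕ) (ht2 : 2 ≤ t) (hn2 : 2 ≤ n)
    (hin : i < n) (hlamn : lam ≤ (n:ℝ)-1) :
    Bw lam n i * |Pn t n i| ≤
      (1 + (t:ℝ)*t*2^t) * ((8*lam+1)^i / (Nat.factorial (i-t) : ℝ)) := by
  have hK0 : (0:ℝ) ≤ (8*lam+1)^i / (Nat.factorial (i-t) : ℝ) := by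
    have : (0:ℝ) < (Nat.factorial (i-t) : ℝ) := by exact_mod_cast Nat.factorial_pos _
    have h8 : (0:ℝ) ≤ 8*lam+1 := by linarith
    positivity
  have hBw0 : 0 ≤ Bw lam n i := Bw_nonneg hlam i hn2 hlamn
  have hBwle : Bw lam n i ≤ lam^i / (Nat.factorial i : ℝ) := Bw_le hlam i hn2 hlamn
  have hcoef1 : (1:ℝ) ≤ 1 + (t:ℝ)*t*2^t := by
    have : (0:ℝ) ≤ (t:ℝ)*t*2^t := by positivity
    linarith
  rcases lt_or_ge i t with hit | hit
  · rw [Pn_def_lt hit, abs_zero, mul_zero]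
    positivity
  rcases le_or_gt i (n - t - 2) with hmid | htop
  · -- middle region
    have hitn : i + t + 2 ≤ n := by omega
    have hPn : Pn t n i = 1 - ∑ δ ∈ Icc 1 t, ∑ j ∈ range δ,
        (((n : ℝ) - (ell i δ j : ℝ)) / (n : ℝ)) * Ahat t n (ell i δ j) * V n i δ j := by
      unfold Pn
      rw [if_neg (by omega), if_pos hmid]
    set S := ∑ δ ∈ Icc 1 t, ∑ j ∈ range δ,
        (((n : ℝ) - (ell i δ j : ℝ)) / (n : ℝ)) * Ahat t n (ell i δ j) * V n i δ j with hSdef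
    have hS0 : 0 ≤ S := by
      rw [hSdef]
      refine P_sum_nonneg t n i (fun δ j h1 h2 h3 => ?_)
      unfold ell
      omega
    have habs : |Pn t n i| ≤ 1 + S := by
      rw [hPn]
      calc |1 - S| ≤ |1| + |S| := abs_sub _ _
        _ = 1 + S := by rw [abs_one, abs_of_nonneg hS0]
    have hterm : Bw lam n i * S ≤
        (t:ℝ)*t*2^t * ((8*lam+1)^i / (Nat.factorial (i-t) : ℝ)) := by
      have hmulsum : Bw lam n i * S = ∑ δ ∈ Icc 1 t, ∑ j ∈ range δ,
          Bw lam n i * ((((n : ℝ) - (ell i δ j : ℝ)) / (n : ℝ)) * Ahat t n (ell i δ j) *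
            V n i δ j) := by
        rw [hSdef, Finset.mul_sum]
        exact Finset.sum_congr rfl (fun δ _ => Finset.mul_sum _ _ _)
      rw [hmulsum]
      set K0 := (8*lam+1)^i / (Nat.factorial (i-t) : ℝ) with hK0def
      calc ∑ δ ∈ Icc 1 t, ∑ j ∈ range δ, Bw lam n i *
            ((((n : ℝ) - (ell i δ j : ℝ)) / (n : ℝ)) * Ahat t n (ell i δ j) * V n i δ j)
          ≤ ∑ δ ∈ Icc 1 t, ∑ j ∈ range δ,
              2^t * (8*lam+1)^i / (Nat.factorial (i-t) : ℝ) := by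
            refine Finset.sum_le_sum (fun δ hδ => Finset.sum_le_sum (fun j hj => ?_))
            rw [mem_Icc] at hδ; rw [mem_range] at hj
            exact P_term_bound hlam t i δ j n hδ.1 hδ.2 hj ht2 hit hitn hlamn
        _ = ∑ δ ∈ Icc 1 t, (δ:ℝ) * (2^t * (8*lam+1)^i / (Nat.factorial (i-t) : ℝ)) := by
            refine Finset.sum_congr rfl (fun δ _ => ?_)
            rw [Finset.sum_const, card_range, nsmul_eq_mul]
        _ ≤ ∑ δ ∈ Icc 1 t, (t:ℝ) * (2^t * (8*lam+1)^i / (Nat.factorial (i-t) : ℝ)) := by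
            refine Finset.sum_le_sum (fun δ hδ => ?_)
            rw [mem_Icc] at hδ
            have : (δ:ℝ) ≤ (t:ℝ) := by exact_mod_cast hδ.2
            refine mul_le_mul_of_nonneg_right this ?_
            have h8 : (0:ℝ) ≤ 8*lam+1 := by linarith
            positivity
        _ = (t:ℝ) * ((t:ℝ) * (2^t * (8*lam+1)^i / (Nat.factorial (i-t) : ℝ))) := by
            rw [Finset.sum_const, Nat.card_Icc, nsmul_eq_mul]
            have htt : t + 1 - 1 = t := by omega
            rw [htt]
        _ = (t:ℝ)*t*2^t * K0 := by rw [hK0def]; ring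
    calc Bw lam n i * |Pn t n i| ≤ Bw lam n i * (1 + S) :=
          mul_le_mul_of_nonneg_left habs hBw0
      _ = Bw lam n i + Bw lam n i * S := by ring
      _ ≤ (8*lam+1)^i / (Nat.factorial (i-t) : ℝ) +
          (t:ℝ)*t*2^t * ((8*lam+1)^i / (Nat.factorial (i-t) : ℝ)) :=
          add_le_add (hBwle.trans (pois_le_K0 hlam t i)) hterm
      _ = (1 + (t:ℝ)*t*2^t) * ((8*lam+1)^i / (Nat.factorial (i-t) : ℝ)) := by ring
  · -- top region
    have hPn : Pn t n i = 1 := by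
      unfold Pn
      rw [if_neg (by omega), if_neg (by omega)]
    rw [hPn, abs_one, mul_one]
    calc Bw lam n i ≤ lam^i / (Nat.factorial i : ℝ) := hBwle
      _ ≤ (8*lam+1)^i / (Nat.factorial (i-t) : ℝ) := pois_le_K0 hlam t i
      _ ≤ (1 + (t:ℝ)*t*2^t) * ((8*lam+1)^i / (Nat.factorial (i-t) : ℝ)) := by
          nlinarith [hK0, hcoef1]

lemma Bw_Qn_bound {lam : ℝ} (hlam : 0 ≤ lam) (t i n : ℕ) (ht2 : 2 ≤ t) (hn2 : 2 ≤ n)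
    (hin : i < n) (hlamn : lam ≤ (n:ℝ)-1) :
    Bw lam n i * (((n:ℝ)-1) * Qn t n i) ≤
      ((2:ℝ)^t + (t:ℝ)*t*4^t) * ((8*lam+1)^i / (Nat.factorial (i-t) : ℝ)) := by
  have h8 : (0:ℝ) ≤ 8*lam+1 := by linarith
  have hf0 : (0:ℝ) < (Nat.factorial (i-t) : ℝ) := by exact_mod_cast Nat.factorial_pos _
  have hK0 : (0:ℝ) ≤ (8*lam+1)^i / (Nat.factorial (i-t) : ℝ) := by positivity
  have hBw0 : 0 ≤ Bw lam n i := Bw_nonneg hlam i hn2 hlamn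
  have hBwle : Bw lam n i ≤ lam^i / (Nat.factorial i : ℝ) := Bw_le hlam i hn2 hlamn
  have hm1 : (0:ℝ) ≤ (n:ℝ) - 1 := by
    have : (2:ℝ) ≤ (n:ℝ) := by exact_mod_cast hn2
    linarith
  rcases le_or_gt i t with hit | hit
  · rw [Qn_def_le hit, mul_zero, mul_zero]
    positivity
  rcases le_or_gt i (n - t - 1) with hmid | htop
  · -- middle region
    have hti : t + 1 ≤ i := by omega
    have hitn : i + t + 1 ≤ n := by omega
    have hQn : Qn t n i = ∑ δ ∈ Icc 1 t, ∑ j ∈ range δ,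
        (((ell i δ j : ℝ) + 1) / (n : ℝ)) * Ahat t n (ell i δ j + 1) * V n i δ j := by
      unfold Qn
      rw [if_neg (by omega), if_pos hmid]
    rw [hQn]
    have hmulsum : Bw lam n i * (((n:ℝ)-1) * ∑ δ ∈ Icc 1 t, ∑ j ∈ range δ,
        (((ell i δ j : ℝ) + 1) / (n : ℝ)) * Ahat t n (ell i δ j + 1) * V n i δ j)
        = ∑ δ ∈ Icc 1 t, ∑ j ∈ range δ, Bw lam n i * (((n:ℝ)-1) *
          ((((ell i δ j : ℝ) + 1) / (n : ℝ)) * Ahat t n (ell i δ j + 1) * V n i δ j)) := by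
      simp only [Finset.mul_sum]
    rw [hmulsum]
    calc ∑ δ ∈ Icc 1 t, ∑ j ∈ range δ, Bw lam n i * (((n:ℝ)-1) *
          ((((ell i δ j : ℝ) + 1) / (n : ℝ)) * Ahat t n (ell i δ j + 1) * V n i δ j))
        ≤ ∑ δ ∈ Icc 1 t, ∑ j ∈ range δ,
            4^t * (8*lam+1)^i / (Nat.factorial (i-t) : ℝ) := by
          refine Finset.sum_le_sum (fun δ hδ => Finset.sum_le_sum (fun j hj => ?_))
          rw [mem_Icc] at hδ; rw [mem_range] at hj
          exact Q_term_bound hlam t i δ j n hδ.1 hδ.2 hj ht2 hti hitn hlamn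
      _ = ∑ δ ∈ Icc 1 t, (δ:ℝ) * (4^t * (8*lam+1)^i / (Nat.factorial (i-t) : ℝ)) := by
          refine Finset.sum_congr rfl (fun δ _ => ?_)
          rw [Finset.sum_const, card_range, nsmul_eq_mul]
      _ ≤ ∑ δ ∈ Icc 1 t, (t:ℝ) * (4^t * (8*lam+1)^i / (Nat.factorial (i-t) : ℝ)) := by
          refine Finset.sum_le_sum (fun δ hδ => ?_)
          rw [mem_Icc] at hδ
          have : (δ:ℝ) ≤ (t:ℝ) := by exact_mod_cast hδ.2
          refine mul_le_mul_of_nonneg_right this (by positivity)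
      _ = (t:ℝ) * ((t:ℝ) * (4^t * (8*lam+1)^i / (Nat.factorial (i-t) : ℝ))) := by
          rw [Finset.sum_const, Nat.card_Icc, nsmul_eq_mul]
          have htt : t + 1 - 1 = t := by omega
          rw [htt]
      _ = ((t:ℝ)*t*4^t) * ((8*lam+1)^i / (Nat.factorial (i-t) : ℝ)) := by ring
      _ ≤ ((2:ℝ)^t + (t:ℝ)*t*4^t) * ((8*lam+1)^i / (Nat.factorial (i-t) : ℝ)) := by
          have h2t : (0:ℝ) ≤ (2:ℝ)^t := by positivity
          nlinarith [mul_nonneg h2t hK0]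
  · -- top region: Qn = 1
    have hQn : Qn t n i = 1 := by
      unfold Qn
      rw [if_neg (by omega), if_neg (by omega)]
    rw [hQn, mul_one]
    have hni : n ≤ i + t := by omega
    have hn1 : ((n:ℝ)-1) ≤ 2^(i+t) := by
      have h1 : (n:ℝ) ≤ ((i+t:ℕ):ℝ) := by exact_mod_cast hni
      have h2 : ((i+t:ℕ):ℝ) ≤ ((2^(i+t):ℕ):ℝ) := by
        exact_mod_cast (Nat.lt_two_pow_self (n := i+t)).le
      have h3 : ((2^(i+t):ℕ):ℝ) = 2^(i+t) := by push_cast; ring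
      linarith [h2.trans_eq h3]
    calc Bw lam n i * ((n:ℝ)-1) ≤ (lam^i / (Nat.factorial i : ℝ)) * 2^(i+t) := by
          refine mul_le_mul hBwle hn1 hm1 (by positivity)
      _ = 2^t * ((2*lam)^i / (Nat.factorial i : ℝ)) := by
          rw [pow_add, mul_pow]
          ring
      _ ≤ 2^t * ((8*lam+1)^i / (Nat.factorial (i-t) : ℝ)) := by
          refine mul_le_mul_of_nonneg_left ?_ (by positivity)
          refine div_le_div₀ (by positivity) (pow_le_pow_left₀ (by linarith) (by linarith) i)
            hf0 ?_
          exact_mod_cast Nat.factorial_le (by omega : i - t ≤ i)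
      _ ≤ ((2:ℝ)^t + (t:ℝ)*t*4^t) * ((8*lam+1)^i / (Nat.factorial (i-t) : ℝ)) := by
          have h4t : (0:ℝ) ≤ (t:ℝ)*t*4^t := by positivity
          nlinarith [hK0]

lemma summand_bound_ev (t : ℕ) (ht2 : 2 ≤ t) {lam ρ : ℝ} (hlam : 0 ≤ lam) (hρ : 0 ≤ ρ) :
    ∀ᶠ n : ℕ in atTop, ∀ i : ℕ, |summand t lam ρ n i| ≤
      (ρ*(1 + (t:ℝ)*t*2^t) + ((2:ℝ)^t + (t:ℝ)*t*4^t)) *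
        ((8*lam+1)^i / (Nat.factorial (i-t) : ℝ)) := by
  filter_upwards [eventually_ge_atTop 2,
    (tendsto_natCast_atTop_atTop (R := ℝ)).eventually_ge_atTop (lam+1),
    (tendsto_natCast_atTop_atTop (R := ℝ)).eventually_ge_atTop (ρ+1)] with n hn2 hl hr
  have hlamn : lam ≤ (n:ℝ) - 1 := by linarith
  have hρn : ρ ≤ (n:ℝ) - 1 := by linarith
  intro i
  have h8 : (0:ℝ) ≤ 8*lam+1 := by linarith
  have hf0 : (0:ℝ) < (Nat.factorial (i-t) : ℝ) := by exact_mod_cast Nat.factorial_pos _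
  have hK0 : (0:ℝ) ≤ (8*lam+1)^i / (Nat.factorial (i-t) : ℝ) := by positivity
  have hcoefP : (0:ℝ) ≤ 1 + (t:ℝ)*t*2^t := by positivity
  unfold summand
  split
  case isFalse h =>
    rw [abs_zero]
    positivity
  case isTrue h =>
    have hBw0 : 0 ≤ Bw lam n i := Bw_nonneg hlam i hn2 hlamn
    have hQ0 : 0 ≤ Qn t n i := Qn_nonneg t n i
    have habs : |Bw lam n i * (ρ * Pn t n i + (((n:ℝ)-1) - ρ) * Qn t n i)|
        ≤ ρ * (Bw lam n i * |Pn t n i|) + Bw lam n i * (((n:ℝ)-1) * Qn t n i) := by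
      rw [abs_mul, abs_of_nonneg hBw0]
      have h1 : |ρ * Pn t n i + (((n:ℝ)-1) - ρ) * Qn t n i|
          ≤ ρ * |Pn t n i| + ((n:ℝ)-1) * Qn t n i := by
        refine (abs_add_le _ _).trans ?_
        rw [abs_mul, abs_of_nonneg hρ, abs_mul, abs_of_nonneg hQ0]
        have h2 : |((n:ℝ)-1) - ρ| ≤ (n:ℝ)-1 := by
          rw [abs_le]
          constructor <;> linarith
        have h3 : |((n:ℝ)-1) - ρ| * Qn t n i ≤ ((n:ℝ)-1) * Qn t n i :=
          mul_le_mul_of_nonneg_right h2 hQ0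
        linarith
      calc Bw lam n i * |ρ * Pn t n i + (((n:ℝ)-1) - ρ) * Qn t n i|
          ≤ Bw lam n i * (ρ * |Pn t n i| + ((n:ℝ)-1) * Qn t n i) :=
            mul_le_mul_of_nonneg_left h1 hBw0
        _ = ρ * (Bw lam n i * |Pn t n i|) + Bw lam n i * (((n:ℝ)-1) * Qn t n i) := by ring
    refine habs.trans ?_
    have hP := Bw_Pn_bound hlam t i n ht2 hn2 h hlamn
    have hQ := Bw_Qn_bound hlam t i n ht2 hn2 h hlamn
    have hP' : ρ * (Bw lam n i * |Pn t n i|) ≤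
        ρ * ((1 + (t:ℝ)*t*2^t) * ((8*lam+1)^i / (Nat.factorial (i-t) : ℝ))) :=
      mul_le_mul_of_nonneg_left hP hρ
    calc ρ * (Bw lam n i * |Pn t n i|) + Bw lam n i * (((n:ℝ)-1) * Qn t n i)
        ≤ ρ * ((1 + (t:ℝ)*t*2^t) * ((8*lam+1)^i / (Nat.factorial (i-t) : ℝ))) +
          ((2:ℝ)^t + (t:ℝ)*t*4^t) * ((8*lam+1)^i / (Nat.factorial (i-t) : ℝ)) :=
          add_le_add hP' hQ
      _ = (ρ*(1 + (t:ℝ)*t*2^t) + ((2:ℝ)^t + (t:ℝ)*t*4^t)) *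
          ((8*lam+1)^i / (Nat.factorial (i-t) : ℝ)) := by ring

lemma bound_summable (t : ℕ) {lam : ℝ} (hlam : 0 ≤ lam) (C : ℝ) :
    Summable (fun i : ℕ => C * ((8*lam+1)^i / (Nat.factorial (i-t) : ℝ))) := by
  refine Summable.mul_left C ?_
  refine (summable_nat_add_iff t).mp ?_
  have h1 : Summable (fun i : ℕ => (8*lam+1)^t * ((8*lam+1)^i / (Nat.factorial i : ℝ))) :=
    (Real.summable_pow_div_factorial (8*lam+1)).mul_left _
  refine h1.congr (fun i => ?_)
  have : (i + t) - t = i := by omega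
  rw [this, pow_add]
  ring

lemma tsum_glim (t : ℕ) (ht2 : 2 ≤ t) {lam : ℝ} (hlam : 0 ≤ lam) (ρ : ℝ) :
    ∑' i : ℕ, glim t lam ρ i =
      ρ * phi lam (t - 1) + (1 / (Nat.factorial (t - 1) : ℝ)) * phi lam t := by
  have hPois : Summable (fun i : ℕ => lam^i / (Nat.factorial i : ℝ) * Real.exp (-lam)) :=
    (Real.summable_pow_div_factorial lam).mul_right _
  have hPois0 : ∀ i : ℕ, 0 ≤ lam^i / (Nat.factorial i : ℝ) * Real.exp (-lam) := by
    intro i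
    have : (0:ℝ) < (Nat.factorial i : ℝ) := by exact_mod_cast Nat.factorial_pos i
    positivity
  have hf1 : Summable (fun i : ℕ =>
      if t ≤ i then lam^i / (Nat.factorial i : ℝ) * Real.exp (-lam) else 0) := by
    refine Summable.of_nonneg_of_le (fun i => ?_) (fun i => ?_) hPois
    · split
      · exact hPois0 i
      · exact le_refl 0
    · split
      · exact le_refl _
      · exact hPois0 i
  have hf2 : Summable (fun i : ℕ =>
      if t + 1 ≤ i then lam^i / (Nat.factorial i : ℝ) * Real.exp (-lam) else 0) := by
    refine Summable.of_nonneg_of_le (fun i => ?_) (fun i => ?_) hPois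
    · split
      · exact hPois0 i
      · exact le_refl 0
    · split
      · exact le_refl _
      · exact hPois0 i
  have hg : ∀ i : ℕ, glim t lam ρ i =
      ρ * (if t ≤ i then lam^i / (Nat.factorial i : ℝ) * Real.exp (-lam) else 0) +
      (1 / (Nat.factorial (t - 1) : ℝ)) *
        (if t + 1 ≤ i then lam^i / (Nat.factorial i : ℝ) * Real.exp (-lam) else 0) := by
    intro i
    unfold glim
    by_cases h1 : t ≤ i <;> by_cases h2 : t + 1 ≤ i
    · rw [if_pos h1, if_pos h2, if_pos h1, if_pos h2]; ring
    · rw [if_pos h1, if_neg h2, if_pos h1, if_neg h2]; ring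
    · omega
    · rw [if_neg h1, if_neg h2, if_neg h1, if_neg h2]; ring
  calc ∑' i : ℕ, glim t lam ρ i
      = ∑' i : ℕ, (ρ * (if t ≤ i then lam^i / (Nat.factorial i : ℝ) * Real.exp (-lam) else 0) +
          (1 / (Nat.factorial (t - 1) : ℝ)) *
            (if t + 1 ≤ i then lam^i / (Nat.factorial i : ℝ) * Real.exp (-lam) else 0)) :=
        tsum_congr hg
    _ = ρ * (∑' i : ℕ, (if t ≤ i then lam^i / (Nat.factorial i : ℝ) * Real.exp (-lam) else 0)) +
        (1 / (Nat.factorial (t - 1) : ℝ)) *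
          (∑' i : ℕ, (if t + 1 ≤ i then lam^i / (Nat.factorial i : ℝ) * Real.exp (-lam) else 0)) := by
        rw [Summable.tsum_add (hf1.mul_left ρ) (hf2.mul_left _), tsum_mul_left, tsum_mul_left]
    _ = ρ * phi lam (t - 1) + (1 / (Nat.factorial (t - 1) : ℝ)) * phi lam t := by
        unfold phi
        have htt : t - 1 + 1 = t := by omega
        rw [htt]

lemma fDE_eq_tsum (t : ℕ) (ht2 : 2 ≤ t) (lam ρ : ℝ) :
    ∀ᶠ n : ℕ in atTop,
      ((n : ℝ) - 1) * fDE t n (lam / ((n : ℝ) - 1)) (ρ / ((n : ℝ) - 1))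
        = ∑' i : ℕ, summand t lam ρ n i := by
  filter_upwards [eventually_ge_atTop 2] with n hn2
  have hm1 : ((n:ℝ) - 1) ≠ 0 := by
    have : (2:ℝ) ≤ (n:ℝ) := by exact_mod_cast hn2
    linarith
  have htsum : ∑' i : ℕ, summand t lam ρ n i = ∑ i ∈ range n, summand t lam ρ n i := by
    refine tsum_eq_sum (fun i hi => ?_)
    rw [mem_range] at hi
    unfold summand
    rw [if_neg hi]
  rw [htsum]
  unfold fDE
  rw [Finset.mul_sum]
  refine Finset.sum_congr rfl (fun i hi => ?_)
  rw [mem_range] at hi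
  unfold summand Bw
  rw [if_pos hi]
  have h1 : ((n:ℝ)-1) * (ρ/((n:ℝ)-1)) = ρ := by field_simp
  linear_combination ((Nat.choose (n-1) i : ℝ) * (lam/((n:ℝ)-1))^i *
    (1 - lam/((n:ℝ)-1))^(n-1-i) * (Pn t n i - Qn t n i)) * h1

/-- for `t ≥ 2`, `λ, ρ ≥ 0`,
`lim_{n→∞} (n−1)·f_n(λ/(n−1); ρ/(n−1)) = ρ·φ(λ;t−1) + (1/(t−1)!)·φ(λ;t)`. -/
theorem stmt5 (t : ℕ) (ht : 2 ≤ t) (lam ρ : ℝ) (hlam : 0 ≤ lam) (hρ : 0 ≤ ρ) :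
    Tendsto (fun n : ℕ =>
        ((n : ℝ) - 1) * fDE t n (lam / ((n : ℝ) - 1)) (ρ / ((n : ℝ) - 1)))
      atTop
      (nhds (ρ * phi lam (t - 1) + (1 / (Nat.factorial (t - 1) : ℝ)) * phi lam t)) := by
  have hsum := bound_summable t hlam (ρ*(1 + (t:ℝ)*t*2^t) + ((2:ℝ)^t + (t:ℝ)*t*4^t))
  have hb : ∀ᶠ n : ℕ in atTop, ∀ i : ℕ, ‖summand t lam ρ n i‖ ≤
      (ρ*(1 + (t:ℝ)*t*2^t) + ((2:ℝ)^t + (t:ℝ)*t*4^t)) *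
        ((8*lam+1)^i / (Nat.factorial (i-t) : ℝ)) := by
    refine (summand_bound_ev t ht hlam hρ).mono (fun n h i => ?_)
    rw [Real.norm_eq_abs]
    exact h i
  have hDCT := tendsto_tsum_of_dominated_convergence hsum
    (fun i => tendsto_summand t ht lam ρ i) hb
  rw [tsum_glim t ht hlam ρ] at hDCT
  exact hDCT.congr' ((fDE_eq_tsum t ht lam ρ).mono (fun n h => h.symm))
end
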